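/- arXiv:2402.09950 — 5 statements merged into one kernel-verified Lean document; each statement's English description precedes it below -/
import Mathlib

section
/- If X is an infinite-dimensional normed vector space, then every non-empty open ball B of X contains a sequence of pairwise disjoint non-empty open balls (B_n) all having the same radius. -/
/-- In an infinite-dimensional normed vector space, every non-empty open ball contains a
sequence of pairwise disjoint non-empty open balls all of the same radius. -/
theorem exists_disjoint_balls_of_infinite_dimensional
    {X : Type*} [NormedAddCommGroup X] [NormedSpace ℝ X]
    (h : ¬ FiniteDimensional ℝ X) (x : X) (r : ℝ) (hr : 0 < r) :
    ∃ r' : ℝ, 0 < r' ∧ ∃ y : ℕ → X,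
      (∀ n, Metric.ball (y n) r' ⊆ Metric.ball x r) ∧
      (∀ m n, m ≠ n → Metric.ball (y m) r' ∩ Metric.ball (y n) r' = ∅) := by
  obtain ⟨R, f, hR, hfR, hsep⟩ := exists_seq_norm_le_one_le_norm_sub h
  have hRpos : (0 : ℝ) < R := by linarith
  set c : ℝ := r / (2 * R) with hc
  have hcpos : 0 < c := by positivity
  refine ⟨c / 2, by positivity, fun n => x + c • f n, ?_, ?_⟩
  · intro n z hz
    rw [Metric.mem_ball] at hz ⊢
    have h1 : dist (x + c • f n) x ≤ r / 2 := by
      rw [dist_eq_norm]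
      simp only [add_sub_cancel_left, norm_smul, Real.norm_eq_abs, abs_of_pos hcpos]
      calc c * ‖f n‖ ≤ c * R := by
            exact mul_le_mul_of_nonneg_left (hfR n) hcpos.le
        _ = r / 2 := by rw [hc, div_mul_eq_mul_div, div_eq_div_iff (by positivity) (by norm_num)]; ring
    have h2 : c ≤ r / 2 := by
      rw [hc]
      exact div_le_div_of_nonneg_left hr.le (by norm_num) (by linarith)
    calc dist z x ≤ dist z (x + c • f n) + dist (x + c • f n) x := dist_triangle _ _ _
      _ < c / 2 + r / 2 := by linarith
      _ ≤ r := by linarith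
  · intro m n hmn
    ext z
    simp only [Set.mem_inter_iff, Metric.mem_ball, Set.mem_empty_iff_false, iff_false]
    rintro ⟨h1, h2⟩
    have hd : dist (x + c • f m) (x + c • f n) < c := by
      calc dist (x + c • f m) (x + c • f n)
          ≤ dist (x + c • f m) z + dist z (x + c • f n) := dist_triangle _ _ _
        _ < c / 2 + c / 2 := by rw [dist_comm (x + c • f m) z]; linarith
        _ = c := by ring
    have : c ≤ dist (x + c • f m) (x + c • f n) := by
      rw [dist_eq_norm]
      have : x + c • f m - (x + c • f n) = c • (f m - f n) := by
        rw [smul_sub]; abel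
      rw [this, norm_smul, Real.norm_eq_abs, abs_of_pos hcpos]
      nlinarith [hsep hmn]
    linarith
end

section
/- Let X be a separable infinite-dimensional normed vector space and μ a Borel measure on X such that μ(B(x,r)) = μ(B(x',r)) for all x, x' ∈ X and r > 0. Then either μ is identically zero, or μ(O) = ∞ for every non-empty open subset O of X. -/
open MeasureTheory

/-- If `X` is a separable infinite-dimensional normed vector space and `μ` is a Borel
measure assigning equal measure to all open balls of equal radius, then either `μ = 0` or
`μ(O) = ∞` for every non-empty open set `O`. -/
theorem measure_eq_zero_or_open_infinite
    {X : Type*} [NormedAddCommGroup X] [NormedSpace ℝ X]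
    [TopologicalSpace.SeparableSpace X] [MeasurableSpace X] [BorelSpace X]
    (hX : ¬ FiniteDimensional ℝ X) (μ : Measure X)
    (h : ∀ (x x' : X) (r : ℝ), 0 < r → μ (Metric.ball x r) = μ (Metric.ball x' r)) :
    μ = 0 ∨ ∀ O : Set X, IsOpen O → O.Nonempty → μ O = ⊤ := by
  obtain ⟨s, hsc, hsd⟩ := TopologicalSpace.exists_countable_dense X
  -- If some ball of radius `t` is null, then `μ = 0`.
  have huniv : ∀ t : ℝ, 0 < t → μ (Metric.ball (0 : X) t) = 0 → μ Set.univ = 0 := by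
    intro t ht h0
    have hcov : Set.univ ⊆ ⋃ x ∈ s, Metric.ball x t := by
      intro y _
      obtain ⟨x, hx1, hx2⟩ := Metric.dense_iff.1 hsd y t ht
      exact Set.mem_biUnion hx2 (by simpa [Metric.mem_ball, dist_comm] using hx1)
    refine le_antisymm ((measure_mono hcov).trans_eq ?_) zero_le
    exact (measure_biUnion_null_iff hsc).2 fun x _ => (h x 0 t ht).trans h0
  by_cases hzero : ∀ r : ℝ, 0 < r → μ (Metric.ball (0 : X) r) = 0
  · left
    rw [← Measure.measure_univ_eq_zero]
    exact huniv 1 one_pos (hzero 1 one_pos)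
  · right
    push_neg at hzero
    obtain ⟨r, hr, hμr⟩ := hzero
    have hpos : ∀ t : ℝ, 0 < t → μ (Metric.ball (0 : X) t) ≠ 0 := by
      intro t ht h0
      exact hμr (le_antisymm ((measure_mono (Set.subset_univ _)).trans_eq (huniv t ht h0))
        zero_le)
    -- every ball has infinite measure
    have htop : ∀ (x : X) (t : ℝ), 0 < t → μ (Metric.ball x t) = ⊤ := by
      intro x t ht
      obtain ⟨R, f, hR, hfle, hf⟩ := exists_seq_norm_le_one_le_norm_sub hX
      have hR0 : (0 : ℝ) < R := lt_trans one_pos hR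
      set a : ℝ := t / (2 * R) with ha
      have ha0 : 0 < a := by positivity
      set g : ℕ → X := fun n => x + a • f n with hg
      set t' : ℝ := t / (4 * R) with ht'
      have ht'0 : 0 < t' := by positivity
      -- the small balls are pairwise disjoint
      have hdisj : Pairwise (Function.onFun Disjoint fun n => Metric.ball (g n) t') := by
        intro m n hmn
        apply Metric.ball_disjoint_ball
        have : 1 ≤ ‖f m - f n‖ := hf hmn
        have hdist : dist (g m) (g n) = a * ‖f m - f n‖ := by
          rw [hg]
          simp only [dist_eq_norm, add_sub_add_left_eq_sub, ← smul_sub, norm_smul,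
            Real.norm_eq_abs, abs_of_pos ha0]
        rw [hdist]
        have h1 : a ≤ a * ‖f m - f n‖ := le_mul_of_one_le_right ha0.le this
        have h2 : t' + t' = a := by
          rw [ht', ha]
          field_simp
          ring
        linarith
      -- the small balls are inside the big ball
      have hsub : ∀ n, Metric.ball (g n) t' ⊆ Metric.ball x t := by
        intro n z hz
        rw [Metric.mem_ball] at hz ⊢
        have h1 : dist (g n) x ≤ a * R := by
          rw [hg, dist_eq_norm]
          simp only [add_sub_cancel_left]
          rw [norm_smul, Real.norm_eq_abs, abs_of_pos ha0]
          exact mul_le_mul_of_nonneg_left (hfle n) ha0.le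
        have h2 : a * R = t / 2 := by
          rw [ha]
          field_simp
        have h3 : t' ≤ t / 4 :=
          div_le_div_of_nonneg_left ht.le (by norm_num) (by linarith)
        calc dist z x ≤ dist z (g n) + dist (g n) x := dist_triangle _ _ _
          _ < t' + (a * R) := by linarith [lt_of_lt_of_le hz (le_refl t')]
          _ ≤ t := by rw [h2]; linarith
      rw [← top_le_iff]
      calc (⊤ : ENNReal) = ∑' _ : ℕ, μ (Metric.ball (0 : X) t') := by
            rw [ENNReal.tsum_const_eq_top_of_ne_zero (hpos t' ht'0)]
        _ = ∑' n, μ (Metric.ball (g n) t') := by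
            exact tsum_congr fun n => h 0 (g n) t' ht'0
        _ = μ (⋃ n, Metric.ball (g n) t') :=
            (measure_iUnion hdisj fun n => measurableSet_ball).symm
        _ ≤ μ (Metric.ball x t) := measure_mono (Set.iUnion_subset hsub)
    rintro O hO ⟨x, hx⟩
    obtain ⟨ε, hε, hball⟩ := Metric.isOpen_iff.1 hO x hx
    exact top_le_iff.1 ((htop x ε hε).symm.le.trans (measure_mono hball))
end

section
/- For every non-empty open subset O of ℓ² and every r > 0, P_r(O) > 0, i.e., the Gaussian product measure P_r on ℓ² is strictly positive. -/
open MeasureTheory ProbabilityTheory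

noncomputable instance : MeasurableSpace (lp (fun _ : ℕ => ℝ) 2) := borel _
instance : BorelSpace (lp (fun _ : ℕ => ℝ) 2) := ⟨rfl⟩

open Filter Topology Set ENNReal NNReal Real

section AuxLemmas

/-- Marginal of a finite product of probability measures. -/
lemma gpAux_pi_map_eval {ι : Type*} [Fintype ι] [DecidableEq ι] (κ : ι → Measure ℝ)
    [∀ i, IsProbabilityMeasure (κ i)] (j : ι) :
    (Measure.pi κ).map (Function.eval j) = κ j := by
  ext s hs
  rw [Measure.map_apply (measurable_pi_apply j) hs, Set.eval_preimage,
    Measure.pi_pi]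
  rw [Finset.prod_eq_single j]
  · simp
  · intro i _ hij
    simp [Function.update_of_ne hij]
  · simp

lemma gpAux_lintegral_eval {ι : Type*} [Fintype ι] [DecidableEq ι] (κ : ι → Measure ℝ)
    [∀ i, IsProbabilityMeasure (κ i)] (j : ι) (f : ℝ → ℝ≥0∞) (hf : Measurable f) :
    ∫⁻ w, f (w j) ∂Measure.pi κ = ∫⁻ x, f x ∂κ j := by
  rw [← gpAux_pi_map_eval κ j, lintegral_map hf (measurable_pi_apply j)]

/-- The second moment of the standard Gaussian, as an extended nonnegative real. -/
noncomputable def gpAuxM : ℝ≥0∞ := ∫⁻ x, ENNReal.ofReal (x ^ 2) ∂gaussianReal 0 1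

lemma gpAuxM_lt_top : gpAuxM < ⊤ := by
  rw [gpAuxM, gaussianReal_of_var_ne_zero _ one_ne_zero,
    lintegral_withDensity_eq_lintegral_mul _ (measurable_gaussianPDF _ _)
      (by fun_prop)]
  have h : ∀ x : ℝ, (gaussianPDF 0 1 * fun x => ENNReal.ofReal (x ^ 2)) x
      = ENNReal.ofReal (gaussianPDFReal 0 1 x * x ^ 2) := by
    intro x
    rw [Pi.mul_apply, gaussianPDF, ← ENNReal.ofReal_mul (gaussianPDFReal_nonneg _ _ _)]
  simp_rw [h]
  have hint : Integrable (fun x : ℝ => gaussianPDFReal 0 1 x * x ^ 2) := by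
    have : (fun x : ℝ => gaussianPDFReal 0 1 x * x ^ 2)
        = fun x : ℝ => (√(2 * π))⁻¹ * (x ^ 2 * rexp (-(2:ℝ)⁻¹ * x ^ 2)) := by
      ext x
      rw [gaussianPDFReal]
      push_cast
      ring_nf
    rw [this]
    apply Integrable.const_mul
    have := integrable_rpow_mul_exp_neg_mul_sq (b := (2:ℝ)⁻¹) (by norm_num) (s := 2) (by norm_num)
    simpa [Real.rpow_natCast] using this
  rw [← hasFiniteIntegral_iff_ofReal]
  · exact hint.hasFiniteIntegral
  · exact ae_of_all _ fun x => mul_nonneg (gaussianPDFReal_nonneg _ _ _) (sq_nonneg _)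

lemma gpAux_sq_moment (v : ℝ≥0) :
    ∫⁻ x, ENNReal.ofReal (x ^ 2) ∂gaussianReal 0 v = (v : ℝ≥0∞) * gpAuxM := by
  have hmap : (gaussianReal 0 1).map ((√v : ℝ) * ·) = gaussianReal 0 v := by
    rw [gaussianReal_map_const_mul]
    congr 1
    · ring
    · ext
      simp [Real.sq_sqrt v.coe_nonneg]
  rw [← hmap, lintegral_map (by fun_prop) (by fun_prop)]
  have : ∀ x : ℝ, ENNReal.ofReal ((√v * x) ^ 2)
      = (v : ℝ≥0∞) * ENNReal.ofReal (x ^ 2) := by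
    intro x
    rw [mul_pow, show √(v:ℝ)^2 = (v:ℝ) from Real.sq_sqrt v.coe_nonneg,
      ENNReal.ofReal_mul v.coe_nonneg]
    congr 1
    exact ENNReal.ofReal_coe_nnreal
  simp_rw [this]
  rw [lintegral_const_mul _ (by fun_prop)]
  rfl

lemma gpAux_gaussian_pos_Ioo (m : ℝ) {v : ℝ≥0} (hv : v ≠ 0) {c d : ℝ} (h : c < d) :
    0 < gaussianReal m v (Set.Ioo c d) := by
  rw [gaussianReal_apply_eq_integral _ hv]
  rw [ENNReal.ofReal_pos]
  rw [setIntegral_pos_iff_support_of_nonneg_ae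
    (ae_of_all _ fun x => gaussianPDFReal_nonneg _ _ _)
    ((integrable_gaussianPDFReal _ _).restrict)]
  have : Function.support (gaussianPDFReal m v) = Set.univ := by
    ext x; simp [Function.mem_support, (gaussianPDFReal_pos m v x hv).ne']
  rw [this, Set.univ_inter]
  simp [Real.volume_Ioo, sub_pos.mpr h]

lemma gpAux_eval_lipschitz (i : ℕ) :
    LipschitzWith 1 (fun f : lp (fun _ : ℕ => ℝ) 2 => f i) := by
  apply LipschitzWith.of_dist_le_mul
  intro f g
  rw [NNReal.coe_one, one_mul, dist_eq_norm, dist_eq_norm]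
  have h := lp.norm_apply_le_norm (by norm_num : (2:ℝ≥0∞) ≠ 0) (f - g) i
  simpa [lp.coeFn_sub] using h

lemma gpAux_eval_measurable (i : ℕ) :
    Measurable (fun f : lp (fun _ : ℕ => ℝ) 2 => f i) :=
  (gpAux_eval_lipschitz i).continuous.measurable

lemma gpAux_sq_summable (z : lp (fun _ : ℕ => ℝ) 2) : Summable (fun i => (z i) ^ 2) := by
  have h := (lp.memℓp z).summable (p := 2) (by norm_num)
  have h2 : ((2:ℝ≥0∞)).toReal = ((2:ℕ):ℝ) := by norm_num
  rw [h2] at h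
  simp only [Real.rpow_natCast] at h
  simpa [sq_abs] using h

end AuxLemmas

/-- `μ` is the Gaussian product measure on `ℓ²` with component variances `r²a_i²`,
characterized by its values on cylinder sets. -/
def IsGaussianProduct (a : ℕ → ℝ) (r : ℝ) (μ : Measure (lp (fun _ : ℕ => ℝ) 2)) : Prop :=
  ∀ (n : ℕ) (F : Set (Fin n → ℝ)), MeasurableSet F →
    μ {x | (fun i : Fin n => x i) ∈ F}
      = Measure.pi (fun i : Fin n => gaussianReal 0 (Real.toNNReal ((r * a i) ^ 2))) F

set_option maxHeartbeats 1000000 in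
/-- The Gaussian product measure `P_r` on `ℓ²` is strictly positive: every non-empty
open subset of `ℓ²` has positive measure. -/
theorem gaussianProduct_pos_of_open
    (a : ℕ → ℝ) (ha : ∀ i, 0 < a i) (hasum : Summable a) (r : ℝ) (hr : 0 < r)
    (μ : Measure (lp (fun _ : ℕ => ℝ) 2)) [IsProbabilityMeasure μ]
    (hμ : IsGaussianProduct a r μ) :
    ∀ O : Set (lp (fun _ : ℕ => ℝ) 2), IsOpen O → O.Nonempty → 0 < μ O := by
  intro O hO hne
  obtain ⟨z, hz⟩ := hne
  obtain ⟨ε, hε, hball⟩ := Metric.isOpen_iff.mp hO z hz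
  set t : ℝ := ε ^ 2 / 16 with htdef
  have ht : 0 < t := by positivity
  have hvne : ∀ i : ℕ, Real.toNNReal ((r * a i) ^ 2) ≠ 0 := by
    intro i
    simp only [ne_eq, Real.toNNReal_eq_zero, not_le]
    exact pow_pos (mul_pos hr (ha i)) 2
  -- summability facts
  have hz2 : Summable (fun i => (z i) ^ 2) := gpAux_sq_summable z
  have hb2 : Summable (fun i => (r * a i) ^ 2) := by
    obtain ⟨C, hC⟩ := (hasum.tendsto_atTop_zero).bddAbove_range
    simp only [mem_upperBounds, Set.mem_range, forall_exists_index,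
      forall_apply_eq_imp_iff] at hC
    refine Summable.of_nonneg_of_le (fun i => sq_nonneg _)
      (fun i => ?_) (hasum.mul_left (r ^ 2 * C))
    have h1 : 0 ≤ a i := (ha i).le
    have h2 : a i ≤ C := hC i
    nlinarith [mul_le_mul_of_nonneg_left (mul_le_mul_of_nonneg_right h2 h1) (sq_nonneg r)]
  -- constants
  have hMne : gpAuxM ≠ ⊤ := gpAuxM_lt_top.ne
  set Mr : ℝ := gpAuxM.toReal with hMrdef
  have hMr : 0 ≤ Mr := ENNReal.toReal_nonneg
  -- choice of N
  have h1 : Tendsto (fun N => ∑' j, (z (j + N)) ^ 2) atTop (𝓝 0) :=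
    _root_.tendsto_sum_nat_add (fun n => (z n) ^ 2)
  have h2 : Tendsto (fun N => ∑' j, (r * a (j + N)) ^ 2) atTop (𝓝 0) :=
    _root_.tendsto_sum_nat_add (fun n => (r * a n) ^ 2)
  obtain ⟨N, hN1, hN2⟩ :=
    ((h1.eventually_lt_const ht).and (h2.eventually_lt_const
      (show (0:ℝ) < t / (2 * (Mr + 1)) by positivity))).exists
  -- the half-width of the head box
  set δ : ℝ := ε / (2 * ((N:ℝ) + 1)) with hδdef
  have hδ : 0 < δ := by positivity
  have hNδ : (N : ℝ) * δ ^ 2 ≤ ε ^ 2 / 4 := by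
    have hN0 : (0:ℝ) ≤ N := Nat.cast_nonneg N
    rw [hδdef, div_pow, mul_div_assoc']
    rw [div_le_div_iff₀ (by positivity) (by norm_num)]
    nlinarith [mul_nonneg (sq_nonneg ε) hN0, mul_nonneg (mul_nonneg (sq_nonneg ε) hN0) hN0,
      sq_nonneg ε]
  -- head and tail sets
  set A0 : Set (Fin N → ℝ) :=
    Set.univ.pi (fun i => Set.Ioo (z i - δ) (z i + δ)) with hA0def
  have hA0meas : MeasurableSet A0 :=
    MeasurableSet.univ_pi fun i => measurableSet_Ioo
  set p0 : ℝ≥0∞ :=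
    Measure.pi (fun i : Fin N => gaussianReal 0 (Real.toNNReal ((r * a i) ^ 2))) A0 with hp0def
  have hp0 : 0 < p0 := by
    rw [hp0def, hA0def, Measure.pi_pi]
    refine CanonicallyOrderedAdd.prod_pos.mpr fun i _ => ?_
    exact gpAux_gaussian_pos_Ioo 0 (hvne i) (by linarith)
  -- tail sets
  set D : ∀ m : ℕ, Set (Fin m → ℝ) := fun m => {w | ∑ j : Fin m, (w j) ^ 2 ≤ t} with hDdef
  have hDmeas : ∀ m, MeasurableSet (D m) :=
    fun m => measurableSet_le (by fun_prop) measurable_const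
  -- cylinder sets
  set C : ∀ m : ℕ, Set (Fin (N + m) → ℝ) := fun m =>
    {w | (∀ i : Fin N, w (Fin.castAdd m i) ∈ Set.Ioo (z i - δ) (z i + δ)) ∧
      ∑ j : Fin m, (w (Fin.natAdd N j)) ^ 2 ≤ t} with hCdef
  have hCmeas : ∀ m, MeasurableSet (C m) := by
    intro m
    have e : C m = (⋂ i : Fin N, {w : Fin (N + m) → ℝ |
        w (Fin.castAdd m i) ∈ Set.Ioo (z i - δ) (z i + δ)}) ∩
        {w : Fin (N + m) → ℝ | ∑ j : Fin m, (w (Fin.natAdd N j)) ^ 2 ≤ t} := by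
      ext w
      simp [hCdef, Set.mem_iInter]
    rw [e]
    exact (MeasurableSet.iInter fun i =>
      (measurable_pi_apply _) measurableSet_Ioo).inter
      (measurableSet_le (by fun_prop) measurable_const)
  -- the events in ℓ²
  set K : ℕ → Set (lp (fun _ : ℕ => ℝ) 2) := fun m =>
    {x | (fun i : Fin (N + m) => x i) ∈ C m} with hKdef
  have hKmeas : ∀ m, MeasurableSet (K m) := by
    intro m
    exact (measurable_pi_lambda _ fun i => gpAux_eval_measurable _) (hCmeas m)
  have hKval : ∀ m, μ (K m) = Measure.pi
      (fun i : Fin (N + m) => gaussianReal 0 (Real.toNNReal ((r * a i) ^ 2))) (C m) :=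
    fun m => hμ (N + m) (C m) (hCmeas m)
  -- factorization of the cylinder measure
  have hfact : ∀ m, Measure.pi
      (fun i : Fin (N + m) => gaussianReal 0 (Real.toNNReal ((r * a i) ^ 2))) (C m)
      = p0 * Measure.pi
          (fun j : Fin m => gaussianReal 0 (Real.toNNReal ((r * a (N + j)) ^ 2))) (D m) := by
    intro m
    set κ' : Fin (N + m) → Measure ℝ :=
      fun i => gaussianReal 0 (Real.toNNReal ((r * a i) ^ 2)) with hκ'def
    have mp2 := measurePreserving_sumPiEquivProdPi_symm
      (fun s : Fin N ⊕ Fin m => κ' (finSumFinEquiv s))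
    have mp1 := measurePreserving_piCongrLeft (fun i => κ' i) finSumFinEquiv
    have mp := mp1.comp mp2
    have hpre : ((MeasurableEquiv.piCongrLeft (fun _ : Fin (N + m) => ℝ) finSumFinEquiv) ∘
        (MeasurableEquiv.sumPiEquivProdPi (fun _ : Fin N ⊕ Fin m => ℝ)).symm) ⁻¹' (C m)
        = A0 ×ˢ D m := by
      ext ⟨u, w⟩
      have hl : ∀ i : Fin N,
          ((MeasurableEquiv.piCongrLeft (fun _ : Fin (N + m) => ℝ) finSumFinEquiv)
            ((MeasurableEquiv.sumPiEquivProdPi (fun _ : Fin N ⊕ Fin m => ℝ)).symm (u, w)))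
            (Fin.castAdd m i) = u i := by
        intro i
        rw [← finSumFinEquiv_apply_left i]
        exact Equiv.piCongrLeft_sumInl (fun _ => ℝ) finSumFinEquiv u w i
      have hr' : ∀ j : Fin m,
          ((MeasurableEquiv.piCongrLeft (fun _ : Fin (N + m) => ℝ) finSumFinEquiv)
            ((MeasurableEquiv.sumPiEquivProdPi (fun _ : Fin N ⊕ Fin m => ℝ)).symm (u, w)))
            (Fin.natAdd N j) = w j := by
        intro j
        rw [← finSumFinEquiv_apply_right j]
        exact Equiv.piCongrLeft_sumInr (fun _ => ℝ) finSumFinEquiv u w j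
      simp only [Set.mem_preimage, Function.comp_apply, Set.mem_prod, hCdef,
        Set.mem_setOf_eq, hl, hr', hA0def, hDdef, Set.mem_pi, Set.mem_univ,
        forall_true_left, true_implies]
    have step := mp.measure_preimage (hCmeas m).nullMeasurableSet
    rw [hpre, Measure.prod_prod] at step
    have e1 : (fun i : Fin N => κ' (finSumFinEquiv (Sum.inl i)))
        = fun i : Fin N => gaussianReal 0 (Real.toNNReal ((r * a i) ^ 2)) := by
      funext i
      simp [hκ'def]
    have e2 : (fun j : Fin m => κ' (finSumFinEquiv (Sum.inr j)))
        = fun j : Fin m => gaussianReal 0 (Real.toNNReal ((r * a (N + j)) ^ 2)) := by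
      funext j
      simp [hκ'def]
    rw [e1, e2] at step
    rw [hp0def]
    exact step.symm
  -- lower bound for the tail factor
  have hDbound : ∀ m, (1:ℝ≥0∞) / 2 ≤ Measure.pi
      (fun j : Fin m => gaussianReal 0 (Real.toNNReal ((r * a (N + j)) ^ 2))) (D m) := by
    intro m
    set ν := Measure.pi
      (fun j : Fin m => gaussianReal 0 (Real.toNNReal ((r * a (N + j)) ^ 2))) with hνdef
    have hcompl : ν (D m)ᶜ ≤ 1 / 2 := by
      have hsub : (D m)ᶜ ⊆ {w : Fin m → ℝ |
          ENNReal.ofReal t ≤ ∑ j : Fin m, ENNReal.ofReal ((w j) ^ 2)} := by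
        intro w hw
        simp only [hDdef, Set.mem_compl_iff, Set.mem_setOf_eq, not_le] at hw
        refine le_trans (ENNReal.ofReal_le_ofReal hw.le) ?_
        rw [ENNReal.ofReal_sum_of_nonneg fun j _ => sq_nonneg _]
      have hmarkov : ν {w : Fin m → ℝ |
          ENNReal.ofReal t ≤ ∑ j : Fin m, ENNReal.ofReal ((w j) ^ 2)}
          ≤ (∫⁻ w, ∑ j : Fin m, ENNReal.ofReal ((w j) ^ 2) ∂ν) / ENNReal.ofReal t :=
        meas_ge_le_lintegral_div
          ((Finset.measurable_sum Finset.univ fun j _ =>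
            ((measurable_pi_apply j).pow_const 2).ennreal_ofReal).aemeasurable)
          (ENNReal.ofReal_pos.mpr ht).ne' ENNReal.ofReal_ne_top
      have hlint : (∫⁻ w, ∑ j : Fin m, ENNReal.ofReal ((w j) ^ 2) ∂ν)
          = ∑ j : Fin m, ((Real.toNNReal ((r * a (N + j)) ^ 2) : ℝ≥0∞)) * gpAuxM := by
        rw [lintegral_finset_sum _ (fun j _ => by fun_prop)]
        refine Finset.sum_congr rfl fun j _ => ?_
        rw [hνdef, gpAux_lintegral_eval _ j (fun x => ENNReal.ofReal (x ^ 2)) (by fun_prop),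
          gpAux_sq_moment]
      have hsum_le : ∑ j : Fin m, ((Real.toNNReal ((r * a (N + j)) ^ 2) : ℝ≥0∞)) * gpAuxM
          ≤ ENNReal.ofReal t / 2 := by
        rw [← Finset.sum_mul]
        have hle1 : ∑ j : Fin m, ((Real.toNNReal ((r * a (N + j)) ^ 2) : ℝ≥0∞))
            ≤ ENNReal.ofReal (∑' j : ℕ, (r * a (j + N)) ^ 2) := by
          have e1 : ∑ j : Fin m, ((Real.toNNReal ((r * a (N + j)) ^ 2) : ℝ≥0∞))
              = ∑ j ∈ Finset.range m, ENNReal.ofReal ((r * a (N + j)) ^ 2) := by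
            rw [← Fin.sum_univ_eq_sum_range]
            rfl
          rw [e1]
          have e2 : ENNReal.ofReal (∑' j : ℕ, (r * a (j + N)) ^ 2)
              = ∑' j : ℕ, ENNReal.ofReal ((r * a (N + j)) ^ 2) := by
            rw [ENNReal.ofReal_tsum_of_nonneg (fun j => sq_nonneg _)
              (((_root_.summable_nat_add_iff N).mpr hb2))]
            exact tsum_congr fun j => by rw [add_comm j N]
          rw [e2]
          exact ENNReal.sum_le_tsum _
        have hle2 : ENNReal.ofReal (∑' j : ℕ, (r * a (j + N)) ^ 2) * gpAuxM
            ≤ ENNReal.ofReal t / 2 := by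
          rw [show gpAuxM = ENNReal.ofReal Mr from (ENNReal.ofReal_toReal hMne).symm,
            ← ENNReal.ofReal_mul (tsum_nonneg fun j => sq_nonneg _)]
          refine le_trans (ENNReal.ofReal_le_ofReal (q := t / 2) ?_) (le_of_eq ?_)
          · have htail : (0:ℝ) ≤ ∑' j : ℕ, (r * a (j + N)) ^ 2 :=
              tsum_nonneg fun j => sq_nonneg _
            have e1 : (∑' j : ℕ, (r * a (j + N)) ^ 2) * Mr
                ≤ (t / (2 * (Mr + 1))) * Mr := mul_le_mul_of_nonneg_right hN2.le hMr
            have e2 : (t / (2 * (Mr + 1))) * Mr ≤ t / 2 := by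
              rw [div_mul_eq_mul_div, div_le_div_iff₀ (by positivity) (by norm_num)]
              nlinarith [ht.le, hMr]
            linarith
          · rw [ENNReal.ofReal_div_of_pos (by norm_num : (0:ℝ) < 2), ENNReal.ofReal_ofNat]
        exact le_trans (mul_le_mul_left hle1 _) hle2
      refine le_trans (measure_mono hsub) (le_trans hmarkov ?_)
      rw [hlint]
      refine le_trans (ENNReal.div_le_div_right hsum_le _) ?_
      rw [div_eq_mul_inv, div_eq_mul_inv, mul_right_comm,
        ← div_eq_mul_inv (ENNReal.ofReal t) (ENNReal.ofReal t),
        ENNReal.div_self (ENNReal.ofReal_pos.mpr ht).ne' ENNReal.ofReal_ne_top, one_mul,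
        one_div]
    have := measure_compl (hDmeas m) (measure_ne_top ν _)
    have h1' : ν (D m) = 1 - ν (D m)ᶜ := by
      rw [this, measure_univ]
      rw [ENNReal.sub_sub_cancel one_ne_top (measure_mono (Set.subset_univ _) |>.trans_eq measure_univ)]
    rw [h1']
    calc (1:ℝ≥0∞) / 2 = 1 - 1/2 := by rw [ENNReal.sub_half one_ne_top]
    _ ≤ 1 - ν (D m)ᶜ := tsub_le_tsub_left hcompl 1
  -- each K m has measure at least p0 / 2
  have hKlow : ∀ m, p0 * (1 / 2) ≤ μ (K m) := by
    intro m
    rw [hKval m, hfact m]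
    exact mul_le_mul_right (hDbound m) p0
  -- membership description of K m
  have hKmem : ∀ (m : ℕ) (y : lp (fun _ : ℕ => ℝ) 2), y ∈ K m ↔
      ((∀ i : Fin N, y i ∈ Set.Ioo (z i - δ) (z i + δ)) ∧
        ∑ j ∈ Finset.range m, (y (N + j)) ^ 2 ≤ t) := by
    intro m y
    simp only [hKdef, hCdef, Set.mem_setOf_eq]
    constructor
    · rintro ⟨h1', h2'⟩
      refine ⟨fun i => by simpa using h1' i, ?_⟩
      rw [← Fin.sum_univ_eq_sum_range (fun j => (y (N + j)) ^ 2) m]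
      simpa using h2'
    · rintro ⟨h1', h2'⟩
      refine ⟨fun i => by simpa using h1' i, ?_⟩
      rw [← Fin.sum_univ_eq_sum_range (fun j => (y (N + j)) ^ 2) m] at h2'
      simpa using h2'
  -- K is antitone
  have hKanti : Antitone K := by
    intro m m' hmm' y hy
    rw [hKmem] at hy ⊢
    refine ⟨hy.1, le_trans ?_ hy.2⟩
    exact Finset.sum_le_sum_of_subset_of_nonneg
      (Finset.range_subset_range.mpr hmm') (fun j _ _ => sq_nonneg _)
  -- the intersection is contained in O
  have hGO : (⋂ m, K m) ⊆ O := by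
    intro y hy
    apply hball
    rw [Metric.mem_ball, dist_eq_norm]
    have hy' := fun m => (hKmem m y).mp (Set.mem_iInter.mp hy m)
    have hhead : ∀ i : Fin N, y i ∈ Set.Ioo (z i - δ) (z i + δ) := (hy' 0).1
    have htail : ∀ m, ∑ j ∈ Finset.range m, (y (N + j)) ^ 2 ≤ t := fun m => (hy' m).2
    have hy2 : Summable (fun i => (y i) ^ 2) := gpAux_sq_summable y
    have hyz2 : Summable (fun i => (y i - z i) ^ 2) := by
      have h := gpAux_sq_summable (y - z)
      apply h.congr
      intro i
      simp [lp.coeFn_sub]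
    have hytail : ∑' j, (y (N + j)) ^ 2 ≤ t :=
      Summable.tsum_le_of_sum_range_le ((_root_.summable_nat_add_iff N).mpr hy2 |>.congr
        fun j => by rw [add_comm j N]) htail
    -- the norm squared
    have hnorm : ‖y - z‖ ^ 2 = ∑' i, (y i - z i) ^ 2 := by
      have h := lp.norm_rpow_eq_tsum (p := 2) (by norm_num) (y - z)
      have h2 : ((2:ℝ≥0∞)).toReal = ((2:ℕ):ℝ) := by norm_num
      rw [h2] at h
      simp only [Real.rpow_natCast] at h
      rw [h]
      apply tsum_congr
      intro i
      simp [lp.coeFn_sub, sq_abs]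
    have hsplit : ∑' i, (y i - z i) ^ 2
        = ∑ i ∈ Finset.range N, (y i - z i) ^ 2 + ∑' i, (y (i + N) - z (i + N)) ^ 2 :=
      (Summable.sum_add_tsum_nat_add N hyz2).symm
    -- head bound
    have hheadsum : ∑ i ∈ Finset.range N, (y i - z i) ^ 2 ≤ (N:ℝ) * δ ^ 2 := by
      have : ∀ i ∈ Finset.range N, (y i - z i) ^ 2 ≤ δ ^ 2 := by
        intro i hi
        rw [Finset.mem_range] at hi
        have := hhead ⟨i, hi⟩
        simp only [Set.mem_Ioo] at this
        have h1' : z i - δ < y i := by simpa using this.1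
        have h2' : y i < z i + δ := by simpa using this.2
        nlinarith
      calc ∑ i ∈ Finset.range N, (y i - z i) ^ 2 ≤ ∑ _i ∈ Finset.range N, δ ^ 2 :=
            Finset.sum_le_sum this
      _ = (N:ℝ) * δ ^ 2 := by simp [mul_comm]
    -- tail bound
    have hztail : ∑' j, (z (j + N)) ^ 2 < t := hN1
    have htailbound : ∑' i, (y (i + N) - z (i + N)) ^ 2 ≤ 4 * t := by
      have hyS : Summable (fun i => (y (i + N)) ^ 2) := (_root_.summable_nat_add_iff N).mpr hy2
      have hzS : Summable (fun i => (z (i + N)) ^ 2) := (_root_.summable_nat_add_iff N).mpr hz2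
      have hS : Summable (fun i => 2 * (y (i + N)) ^ 2 + 2 * (z (i + N)) ^ 2) :=
        ((hyS.mul_left 2).add (hzS.mul_left 2))
      have hle : ∀ i, (y (i + N) - z (i + N)) ^ 2
          ≤ 2 * (y (i + N)) ^ 2 + 2 * (z (i + N)) ^ 2 := by
        intro i
        nlinarith [sq_nonneg (y (i + N) + z (i + N))]
      calc ∑' i, (y (i + N) - z (i + N)) ^ 2
          ≤ ∑' i, (2 * (y (i + N)) ^ 2 + 2 * (z (i + N)) ^ 2) :=
            Summable.tsum_le_tsum hle ((_root_.summable_nat_add_iff N).mpr hyz2) hS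
      _ = 2 * (∑' i, (y (i + N)) ^ 2) + 2 * (∑' i, (z (i + N)) ^ 2) := by
            rw [Summable.tsum_add (hyS.mul_left 2) (hzS.mul_left 2), _root_.tsum_mul_left, _root_.tsum_mul_left]
      _ ≤ 2 * t + 2 * t := by
            have hyt : ∑' i, (y (i + N)) ^ 2 ≤ t := by
              refine le_trans (le_of_eq ?_) hytail
              exact tsum_congr fun i => by rw [add_comm i N]
            have hzt : ∑' i, (z (i + N)) ^ 2 ≤ t := hztail.le
            have hyn : (0:ℝ) ≤ ∑' i, (y (i + N)) ^ 2 := tsum_nonneg fun i => sq_nonneg _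
            linarith
      _ = 4 * t := by ring
    have hlt : ‖y - z‖ ^ 2 < ε ^ 2 := by
      rw [hnorm, hsplit]
      have h4t : 4 * t = ε ^ 2 / 4 := by rw [htdef]; ring
      have hsq : 0 < ε ^ 2 := pow_pos hε 2
      linarith [hheadsum, htailbound, hNδ]
    exact lt_of_pow_lt_pow_left₀ 2 hε.le hlt
  -- conclusion
  have hμG : p0 * (1 / 2) ≤ μ (⋂ m, K m) := by
    have hG : Tendsto (fun m => μ (K m)) atTop (𝓝 (μ (⋂ m, K m))) :=
      tendsto_measure_iInter_atTop (fun m => (hKmeas m).nullMeasurableSet) hKanti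
        ⟨0, measure_ne_top μ _⟩
    exact ge_of_tendsto' hG hKlow
  calc (0:ℝ≥0∞) < p0 * (1 / 2) := by
        apply ENNReal.mul_pos hp0.ne' (by norm_num)
  _ ≤ μ (⋂ m, K m) := hμG
  _ ≤ μ O := measure_mono hGO
end

section
/- Let P_r be the Gaussian product measure on ℓ² with component variances r²a_i², and set A = sup_k a_k. Then ∫_{ℓ²} exp(c ||x||²_{ℓ²}) dP_r(x) < ∞ for every 0 < c < 1/(2r²A²), and ∫_{ℓ²} exp(c ||x||²_{ℓ²}) dP_r(x) = ∞ for every c ≥ 1/(2r²A²). Moreover ∫_{ℓ²} exp(c ||x||^{2+δ}_{ℓ²}) dP_r(x) = ∞ for all c, δ > 0. -/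
open MeasureTheory ProbabilityTheory

section Aux

open Real
open scoped NNReal ENNReal

private lemma lintegral_pi_prod : ∀ (n : ℕ) (ν : Fin n → Measure ℝ), (∀ i, SigmaFinite (ν i)) →
    ∀ (f : Fin n → ℝ → ENNReal), (∀ i, Measurable (f i)) →
    ∫⁻ y : Fin n → ℝ, ∏ i, f i (y i) ∂Measure.pi ν = ∏ i, ∫⁻ t, f i t ∂ν i := by
  intro n
  induction n with
  | zero =>
    intro ν _ f hf
    simp [Measure.pi_empty_univ]
  | succ n ih =>
    intro ν hσ f hf
    haveI := hσ
    have hmp := measurePreserving_piFinSuccAbove ν 0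
    have hG : Measurable fun z : Fin n → ℝ => ∏ j : Fin n, f (Fin.succAbove 0 j) (z j) :=
      Finset.measurable_prod _ fun j _ => (hf _).comp (measurable_pi_apply j)
    have hF : Measurable fun p : ℝ × (Fin n → ℝ) =>
        f 0 p.1 * ∏ j : Fin n, f (Fin.succAbove 0 j) (p.2 j) :=
      ((hf 0).comp measurable_fst).mul (hG.comp measurable_snd)
    calc ∫⁻ y : Fin (n+1) → ℝ, ∏ i, f i (y i) ∂Measure.pi ν
        = ∫⁻ p : ℝ × (Fin n → ℝ), f 0 p.1 * ∏ j : Fin n, f (Fin.succAbove 0 j) (p.2 j)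
            ∂((ν 0).prod (Measure.pi fun j => ν (Fin.succAbove 0 j))) := by
          rw [← hmp.lintegral_comp hF]
          congr 1
          ext y
          simp only [MeasurableEquiv.piFinSuccAbove_apply]
          rw [Fin.prod_univ_succAbove (fun i => f i (y i)) 0]
          simp [Fin.insertNthEquiv, Fin.tail]
      _ = (∫⁻ t, f 0 t ∂ν 0) *
            ∏ j : Fin n, ∫⁻ t, f (Fin.succAbove 0 j) t ∂ν (Fin.succAbove 0 j) := by
          rw [lintegral_prod_mul (hf 0).aemeasurable hG.aemeasurable,
            ih _ (fun j => inferInstance) _ (fun j => hf _)]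
      _ = ∏ i, ∫⁻ t, f i t ∂ν i := by
          rw [Fin.prod_univ_succAbove (fun i => ∫⁻ t, f i t ∂ν i) 0]

private lemma pi_map_eval {n : ℕ} (ν : Fin n → Measure ℝ) [∀ i, IsProbabilityMeasure (ν i)]
    (i : Fin n) : (Measure.pi ν).map (Function.eval i) = ν i := by
  ext s hs
  rw [Measure.map_apply (measurable_pi_apply i) hs, Set.eval_preimage, Measure.pi_pi]
  rw [Fintype.prod_eq_single i (fun j hj => by simp [Function.update_of_ne hj])]
  simp

private lemma gauss_div {v : ℝ≥0} (hv : v ≠ 0) {c : ℝ} (hc : (2 * (v : ℝ))⁻¹ ≤ c) :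
    ∫⁻ t, ENNReal.ofReal (rexp (c * t ^ 2)) ∂gaussianReal 0 v = ⊤ := by
  have hvpos : (0 : ℝ) < v := by positivity
  have hmeas : Measurable fun t : ℝ => ENNReal.ofReal (rexp (c * t ^ 2)) :=
    (((measurable_id.pow_const 2).const_mul c).exp).ennreal_ofReal
  rw [gaussianReal_of_var_ne_zero _ hv,
    lintegral_withDensity_eq_lintegral_mul _ (measurable_gaussianPDF _ _) hmeas]
  have hK : (0:ℝ) < (√(2 * π * v))⁻¹ := by positivity
  have hle : ∀ t : ℝ, ENNReal.ofReal ((√(2 * π * v))⁻¹)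
      ≤ (gaussianPDF 0 v * fun t => ENNReal.ofReal (rexp (c * t ^ 2))) t := by
    intro t
    simp only [Pi.mul_apply, gaussianPDF, gaussianPDFReal]
    rw [← ENNReal.ofReal_mul (by positivity)]
    apply ENNReal.ofReal_le_ofReal
    rw [mul_assoc _ (rexp _) (rexp _), ← Real.exp_add]
    nth_rewrite 1 [← mul_one ((√(2 * π * (v:ℝ)))⁻¹)]
    apply mul_le_mul_of_nonneg_left _ (by positivity)
    apply Real.one_le_exp
    have : -(t - 0) ^ 2 / (2 * (v:ℝ)) + c * t ^ 2 = (c - (2 * (v:ℝ))⁻¹) * t ^ 2 := by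
      field_simp; ring
    rw [this]
    have := sub_nonneg.mpr hc
    positivity
  refine top_le_iff.mp ?_
  calc (⊤ : ENNReal) = ENNReal.ofReal ((√(2 * π * v))⁻¹) * volume (Set.univ : Set ℝ) := by
        rw [Real.volume_univ, ENNReal.mul_top ((ENNReal.ofReal_pos.mpr hK).ne')]
    _ = ∫⁻ _ : ℝ, ENNReal.ofReal ((√(2 * π * v))⁻¹) := by rw [lintegral_const]
    _ ≤ _ := lintegral_mono hle

private lemma gauss_div' {v : ℝ≥0} (hv : v ≠ 0) {c δ : ℝ} (hc : 0 < c) (hδ : 0 < δ) :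
    ∫⁻ t, ENNReal.ofReal (rexp (c * |t| ^ (2 + δ))) ∂gaussianReal 0 v = ⊤ := by
  have hvpos : (0 : ℝ) < v := by positivity
  have hmeas : Measurable fun t : ℝ => ENNReal.ofReal (rexp (c * |t| ^ (2 + δ))) := by
    apply Measurable.ennreal_ofReal
    have : Continuous fun t : ℝ => |t| ^ (2 + δ) :=
      (Real.continuous_rpow_const (by positivity)).comp continuous_abs
    exact ((this.measurable.const_mul c)).exp
  rw [gaussianReal_of_var_ne_zero _ hv,
    lintegral_withDensity_eq_lintegral_mul _ (measurable_gaussianPDF _ _) hmeas]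
  set K : ℝ := (√(2 * π * v))⁻¹ with hKdef
  have hK : (0:ℝ) < K := by positivity
  set M : ℝ := max 1 (((2 * (v:ℝ) * c)⁻¹) ^ δ⁻¹) with hMdef
  have hM1 : (1:ℝ) ≤ M := le_max_left _ _
  have hle : ∀ t : ℝ, (Set.Ici M).indicator (fun _ => ENNReal.ofReal K) t
      ≤ (gaussianPDF 0 v * fun t => ENNReal.ofReal (rexp (c * |t| ^ (2 + δ)))) t := by
    intro t
    rcases le_or_gt M t with h | h
    · rw [Set.indicator_of_mem (Set.mem_Ici.mpr h)]
      have ht1 : (1:ℝ) ≤ t := hM1.trans h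
      have ht0 : (0:ℝ) < t := lt_of_lt_of_le one_pos ht1
      simp only [Pi.mul_apply, gaussianPDF, gaussianPDFReal]
      rw [← ENNReal.ofReal_mul (by positivity)]
      apply ENNReal.ofReal_le_ofReal
      rw [mul_assoc _ (rexp _) (rexp _), ← Real.exp_add]
      have habs : |t| = t := abs_of_pos ht0
      have hsplit : |t| ^ (2 + δ) = t ^ 2 * t ^ δ := by
        rw [habs, Real.rpow_add ht0, Real.rpow_two]
      have htδ : (2 * (v:ℝ) * c)⁻¹ ≤ t ^ δ := by
        calc (2 * (v:ℝ) * c)⁻¹ = (((2 * (v:ℝ) * c)⁻¹) ^ δ⁻¹) ^ δ := by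
              rw [← Real.rpow_mul (by positivity), inv_mul_cancel₀ hδ.ne', Real.rpow_one]
          _ ≤ M ^ δ := by
              apply Real.rpow_le_rpow (by positivity) (le_max_right _ _) hδ.le
          _ ≤ t ^ δ := Real.rpow_le_rpow (by positivity) h hδ.le
      have h1 : (2 * (v:ℝ))⁻¹ ≤ c * t ^ δ := by
        have heq : c * (2 * (v:ℝ) * c)⁻¹ = (2 * (v:ℝ))⁻¹ := by
          field_simp
        rw [← heq]
        exact mul_le_mul_of_nonneg_left htδ hc.le
      have key : (2 * (v:ℝ))⁻¹ * t ^ 2 ≤ c * |t| ^ (2 + δ) := by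
        rw [hsplit]
        calc (2 * (v:ℝ))⁻¹ * t ^ 2 ≤ (c * t ^ δ) * t ^ 2 :=
              mul_le_mul_of_nonneg_right h1 (sq_nonneg t)
          _ = c * (t ^ 2 * t ^ δ) := by ring
      have hre : -(t - 0) ^ 2 / (2 * (v:ℝ)) = -((2 * (v:ℝ))⁻¹ * t ^ 2) := by ring
      have hexp : (1:ℝ) ≤ rexp (-(t - 0) ^ 2 / (2 * (v:ℝ)) + c * |t| ^ (2 + δ)) := by
        apply Real.one_le_exp
        rw [hre]
        linarith [key]
      calc (√(2 * π * (v:ℝ)))⁻¹ = (√(2 * π * (v:ℝ)))⁻¹ * 1 := by rw [mul_one]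
        _ ≤ _ := mul_le_mul_of_nonneg_left hexp (by positivity)
    · rw [Set.indicator_of_notMem (by simpa using h)]
      exact zero_le
  refine top_le_iff.mp ?_
  calc (⊤ : ENNReal) = ENNReal.ofReal K * volume (Set.Ici M) := by
        rw [Real.volume_Ici, ENNReal.mul_top ((ENNReal.ofReal_pos.mpr hK).ne')]
    _ = ∫⁻ t, (Set.Ici M).indicator (fun _ => ENNReal.ofReal K) t := by
        rw [lintegral_indicator_const measurableSet_Ici]
    _ ≤ _ := lintegral_mono hle

private lemma gauss_bound {v : ℝ≥0} (hv : v ≠ 0) {c t₀ : ℝ} (hc : 0 < c) (ht₀ : t₀ < 1)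
    (hw : 2 * c * v ≤ t₀) :
    ∫⁻ t, ENNReal.ofReal (rexp (c * t ^ 2)) ∂gaussianReal 0 v
      ≤ ENNReal.ofReal (rexp (2 * c * (v:ℝ) / (1 - t₀))) := by
  have hvpos : (0 : ℝ) < v := by positivity
  have hwpos : (0:ℝ) < 2 * c * v := by positivity
  have ht₀pos : (0:ℝ) < t₀ := lt_of_lt_of_le hwpos hw
  set b : ℝ := (2 * (v:ℝ))⁻¹ - c with hbdef
  have hb : 0 < b := by
    have h1 : 2 * c * (v:ℝ) < 1 := lt_of_le_of_lt hw ht₀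
    rw [hbdef, sub_pos, inv_eq_one_div, lt_div_iff₀ (by positivity : (0:ℝ) < 2 * (v:ℝ))]
    nlinarith
  have hmeas : Measurable fun t : ℝ => ENNReal.ofReal (rexp (c * t ^ 2)) :=
    (((measurable_id.pow_const 2).const_mul c).exp).ennreal_ofReal
  set K : ℝ := (√(2 * π * (v:ℝ)))⁻¹ with hKdef
  have hK : (0:ℝ) < K := by positivity
  rw [gaussianReal_of_var_ne_zero _ hv,
    lintegral_withDensity_eq_lintegral_mul _ (measurable_gaussianPDF _ _) hmeas]
  have heq : ∀ t : ℝ, (gaussianPDF 0 v * fun t => ENNReal.ofReal (rexp (c * t ^ 2))) t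
      = ENNReal.ofReal (K * rexp (-b * t ^ 2)) := by
    intro t
    simp only [Pi.mul_apply, gaussianPDF, gaussianPDFReal]
    rw [← ENNReal.ofReal_mul (by positivity)]
    congr 1
    rw [mul_assoc _ (rexp _) (rexp _), ← Real.exp_add]
    congr 2
    rw [hbdef]
    field_simp
    ring
  rw [lintegral_congr heq]
  have hint : Integrable (fun t : ℝ => K * rexp (-b * t ^ 2)) :=
    (integrable_exp_neg_mul_sq hb).const_mul K
  rw [← ofReal_integral_eq_lintegral_ofReal hint (ae_of_all _ fun t => by positivity)]
  apply ENNReal.ofReal_le_ofReal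
  rw [MeasureTheory.integral_const_mul, integral_gaussian]
  set w : ℝ := 2 * c * (v:ℝ) with hwdef
  have h1w : 0 < 1 - w := by linarith
  have hs : 0 < 1 - t₀ := by linarith
  have h2vb : 2 * (v:ℝ) * b = 1 - w := by
    rw [hbdef]; field_simp; ring
  have hval : K * √(π / b) = √((1 - w)⁻¹) := by
    rw [hKdef, ← Real.sqrt_inv, ← Real.sqrt_mul (by positivity)]
    congr 1
    rw [← h2vb]
    field_simp
  rw [hval]
  set u : ℝ := w / (1 - t₀) with hudef
  have hu : 0 ≤ u := by positivity
  have e1 : (1 - w)⁻¹ ≤ 1 + u := by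
    rw [← one_div, div_le_iff₀ h1w, hudef]
    have hq : w / (1 - t₀) * (1 - t₀) = w := div_mul_cancel₀ _ hs.ne'
    have hqnn : 0 ≤ w / (1 - t₀) := by positivity
    nlinarith [mul_le_mul_of_nonneg_left (show 1 - t₀ ≤ 1 - w by linarith) hqnn, hq]
  have e2 : 1 + u ≤ rexp u := by
    have := Real.add_one_le_exp u
    linarith
  have e3 : (1 - w)⁻¹ ≤ (rexp u) ^ 2 := by
    have h4 : 1 ≤ rexp u := Real.one_le_exp hu
    nlinarith
  calc √((1 - w)⁻¹) ≤ √((rexp u) ^ 2) := Real.sqrt_le_sqrt e3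
    _ = rexp u := Real.sqrt_sq (Real.exp_pos u).le

end Aux

open Real
open scoped NNReal ENNReal

/-- Fernique-type dichotomy for the Gaussian product measure `P_r` on `ℓ²` with
`A = sup_k a_k`: the integral `∫ exp(c‖x‖²) dP_r` is finite for `0 < c < 1/(2r²A²)` and
infinite for `c ≥ 1/(2r²A²)`; moreover `∫ exp(c‖x‖^{2+δ}) dP_r = ∞` for all `c, δ > 0`. -/
theorem gaussianProduct_exp_norm_sq_integral
    (a : ℕ → ℝ) (ha : ∀ i, 0 < a i) (hasum : Summable a) (r : ℝ) (hr : 0 < r)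
    (μ : Measure (lp (fun _ : ℕ => ℝ) 2)) [IsProbabilityMeasure μ]
    (hμ : IsGaussianProduct a r μ) :
    (∀ c : ℝ, 0 < c → c < 1 / (2 * r ^ 2 * (⨆ k, a k) ^ 2) →
      (∫⁻ x, ENNReal.ofReal (Real.exp (c * ‖x‖ ^ 2)) ∂μ) ≠ ⊤) ∧
    (∀ c : ℝ, 1 / (2 * r ^ 2 * (⨆ k, a k) ^ 2) ≤ c →
      (∫⁻ x, ENNReal.ofReal (Real.exp (c * ‖x‖ ^ 2)) ∂μ) = ⊤) ∧
    (∀ c δ : ℝ, 0 < c → 0 < δ →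
      (∫⁻ x, ENNReal.ofReal (Real.exp (c * ‖x‖ ^ (2 + δ))) ∂μ) = ⊤) := by
  set A : ℝ := ⨆ k, a k with hAdef
  have hbdd : BddAbove (Set.range a) :=
    ⟨∑' i, a i, by rintro x ⟨i, rfl⟩; exact hasum.le_tsum i fun j _ => (ha j).le⟩
  have hAk : ∀ k, a k ≤ A := fun k => le_ciSup hbdd k
  have hApos : 0 < A := lt_of_lt_of_le (ha 0) (hAk 0)
  have hthr : 0 < 1 / (2 * r ^ 2 * A ^ 2) := by
    apply div_pos one_pos
    have := mul_pos (mul_pos (two_pos) (pow_pos hr 2)) (pow_pos hApos 2)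
    exact this
  -- coordinates are measurable
  have hcoord : ∀ i : ℕ, Measurable fun x : lp (fun _ : ℕ => ℝ) 2 => x i := by
    intro i
    have hlip : LipschitzWith 1 fun x : lp (fun _ : ℕ => ℝ) 2 => x i := by
      apply LipschitzWith.of_dist_le_mul
      intro x y
      rw [NNReal.coe_one, one_mul, dist_eq_norm, dist_eq_norm]
      have h := lp.norm_apply_le_norm (by norm_num : (2:ℝ≥0∞) ≠ 0) (x - y) i
      simpa using h
    exact hlip.continuous.measurable
  have hπ : ∀ n : ℕ, Measurable fun (x : lp (fun _ : ℕ => ℝ) 2) (i : Fin n) => x i :=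
    fun n => measurable_pi_lambda _ fun i => hcoord i
  set ν : ℕ → Measure ℝ := fun i => gaussianReal 0 (Real.toNNReal ((r * a i) ^ 2)) with hνdef
  haveI : ∀ i : ℕ, IsProbabilityMeasure (ν i) := fun i => by
    rw [hνdef]; infer_instance
  haveI : ∀ n : ℕ, ∀ i : Fin n, IsProbabilityMeasure (ν i) := fun n i => by infer_instance
  have hmap : ∀ n : ℕ, μ.map (fun (x : lp (fun _ : ℕ => ℝ) 2) (i : Fin n) => x i)
      = Measure.pi fun i : Fin n => ν (i : ℕ) := by
    intro n
    ext F hF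
    rw [Measure.map_apply (hπ n) hF]
    exact hμ n F hF
  have hvne : ∀ i : ℕ, Real.toNNReal ((r * a i) ^ 2) ≠ 0 := by
    intro i
    simp only [ne_eq, Real.toNNReal_eq_zero, not_le]
    have := mul_pos hr (ha i)
    positivity
  have hvval : ∀ i : ℕ, ((Real.toNNReal ((r * a i) ^ 2) : ℝ≥0) : ℝ) = (r * a i) ^ 2 :=
    fun i => Real.coe_toNNReal _ (by positivity)
  have hcoordmap : ∀ k : ℕ, μ.map (fun x : lp (fun _ : ℕ => ℝ) 2 => x k) = ν k := by
    intro k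
    have h1 : (fun x : lp (fun _ : ℕ => ℝ) 2 => x k)
        = (Function.eval (Fin.last k)) ∘
          (fun (x : lp (fun _ : ℕ => ℝ) 2) (i : Fin (k+1)) => x i) := by
      funext x
      simp [Function.eval, Fin.val_last]
    rw [h1, ← Measure.map_map (measurable_pi_apply _) (hπ (k+1)), hmap (k+1),
      pi_map_eval _ (Fin.last k)]
    simp [Fin.val_last]
  -- norm identities
  have h2R : ((2:ℝ≥0∞).toReal) = (2:ℝ) := by norm_num
  have hnorm : ∀ x : lp (fun _ : ℕ => ℝ) 2, ‖x‖ ^ 2 = ∑' i, (x i) ^ 2 := by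
    intro x
    have h := lp.norm_rpow_eq_tsum (p := 2) (by norm_num) x
    rw [h2R] at h
    rw [Real.rpow_two] at h
    simp only [Real.rpow_two, Real.norm_eq_abs, sq_abs] at h
    exact h
  have habs : ∀ (x : lp (fun _ : ℕ => ℝ) 2) (k : ℕ), |x k| ≤ ‖x‖ := by
    intro x k
    have h := lp.norm_apply_le_norm (by norm_num : (2:ℝ≥0∞) ≠ 0) x k
    simpa using h
  have hsq : ∀ (x : lp (fun _ : ℕ => ℝ) 2) (k : ℕ), (x k) ^ 2 ≤ ‖x‖ ^ 2 := by
    intro x k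
    have := pow_le_pow_left₀ (abs_nonneg (x k)) (habs x k) 2
    simpa [sq_abs] using this
  refine ⟨?_, ?_, ?_⟩
  · -- finiteness
    intro c hc hcA
    set t₀ : ℝ := 2 * c * r ^ 2 * A ^ 2 with ht₀def
    have h2rA : (0:ℝ) < 2 * r ^ 2 * A ^ 2 :=
      mul_pos (mul_pos (two_pos) (pow_pos hr 2)) (pow_pos hApos 2)
    have ht₀lt : t₀ < 1 := by
      rw [lt_div_iff₀ h2rA] at hcA
      rw [ht₀def]
      nlinarith
    have hwle : ∀ i : ℕ, 2 * c * ((Real.toNNReal ((r * a i) ^ 2) : ℝ≥0) : ℝ) ≤ t₀ := by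
      intro i
      rw [hvval i, ht₀def]
      have h1 : (r * a i) ^ 2 ≤ r ^ 2 * A ^ 2 := by
        rw [mul_pow]
        exact mul_le_mul_of_nonneg_left (pow_le_pow_left₀ (ha i).le (hAk i) 2) (sq_nonneg r)
      nlinarith
    set f : ℕ → lp (fun _ : ℕ => ℝ) 2 → ℝ≥0∞ :=
      fun n x => ENNReal.ofReal (rexp (c * ∑ i ∈ Finset.range n, (x i) ^ 2)) with hfdef
    have hfmeas : ∀ n, Measurable (f n) := by
      intro n
      apply Measurable.ennreal_ofReal
      exact (Finset.measurable_sum (Finset.range n)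
        (fun i _ => (hcoord i).pow_const 2)).const_mul c |>.exp
    have hfmono : Monotone f := by
      intro m n hmn x
      apply ENNReal.ofReal_le_ofReal
      apply Real.exp_le_exp.mpr
      apply mul_le_mul_of_nonneg_left _ hc.le
      exact Finset.sum_le_sum_of_subset_of_nonneg (Finset.range_subset_range.mpr hmn)
        fun i _ _ => sq_nonneg _
    have hfsup : ∀ x, (⨆ n, f n x) = ENNReal.ofReal (rexp (c * ‖x‖ ^ 2)) := by
      intro x
      have hsml : Summable fun i : ℕ => (x i) ^ 2 := by
        have h := (lp.memℓp x).summable (p := 2) (by norm_num)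
        rw [h2R] at h
        simpa [Real.rpow_two, Real.norm_eq_abs, sq_abs] using h
      have hmono2 : Monotone fun n => f n x := fun m n hmn => hfmono hmn x
      have htend : Filter.Tendsto (fun n => f n x) Filter.atTop
          (nhds (ENNReal.ofReal (rexp (c * ‖x‖ ^ 2)))) := by
        rw [hnorm x]
        exact (ENNReal.continuous_ofReal.tendsto _).comp
          ((Real.continuous_exp.tendsto _).comp
            (((continuous_mul_left c).tendsto _).comp hsml.hasSum.tendsto_sum_nat))
      exact tendsto_nhds_unique (tendsto_atTop_iSup hmono2) htend
    have hrw : ∫⁻ x, ENNReal.ofReal (rexp (c * ‖x‖ ^ 2)) ∂μ = ⨆ n, ∫⁻ x, f n x ∂μ := by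
      rw [← lintegral_iSup hfmeas hfmono]
      exact lintegral_congr fun x => (hfsup x).symm
    rw [hrw]
    set g : ℕ → ℝ := fun i => 2 * c * (r * a i) ^ 2 / (1 - t₀) with hgdef
    have hs : 0 < 1 - t₀ := by
      have hwpos := hwle 0
      linarith
    have hgnn : ∀ i, 0 ≤ g i := by
      intro i
      rw [hgdef]
      positivity
    have hgsum : Summable g := by
      have h1 : Summable fun i : ℕ => (a i) ^ 2 := by
        apply Summable.of_nonneg_of_le (fun i => sq_nonneg _) (fun i => ?_) (hasum.mul_left A)
        have := hAk i
        nlinarith [ha i]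
      apply Summable.of_nonneg_of_le hgnn (fun i => le_of_eq ?_) ((h1.mul_left
        (2 * c * r ^ 2)).div_const (1 - t₀))
      rw [hgdef]
      ring_nf
    have hbound : ∀ n, ∫⁻ x, f n x ∂μ ≤ ENNReal.ofReal (rexp (∑' i, g i)) := by
      intro n
      have hmeas1 : Measurable fun t : ℝ => ENNReal.ofReal (rexp (c * t ^ 2)) :=
        (((measurable_id.pow_const 2).const_mul c).exp).ennreal_ofReal
      have hGmeas : Measurable fun y : Fin n → ℝ =>
          ENNReal.ofReal (rexp (c * ∑ i, (y i) ^ 2)) := by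
        apply Measurable.ennreal_ofReal
        exact ((Finset.measurable_sum Finset.univ
          (fun i _ => (measurable_pi_apply i).pow_const 2)).const_mul c).exp
      have hstep : ∫⁻ x, f n x ∂μ
          = ∏ i : Fin n, ∫⁻ t, ENNReal.ofReal (rexp (c * t ^ 2)) ∂ν i := by
        calc ∫⁻ x, f n x ∂μ
            = ∫⁻ x, (fun y : Fin n → ℝ => ENNReal.ofReal (rexp (c * ∑ i, (y i) ^ 2)))
                ((fun (x : lp (fun _ : ℕ => ℝ) 2) (i : Fin n) => x i) x) ∂μ := by
              apply lintegral_congr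
              intro x
              rw [hfdef]
              simp only []
              rw [Finset.sum_range fun i => (x i) ^ 2]
          _ = ∫⁻ y, ENNReal.ofReal (rexp (c * ∑ i, (y i) ^ 2))
                ∂(μ.map (fun (x : lp (fun _ : ℕ => ℝ) 2) (i : Fin n) => x i)) :=
              (lintegral_map hGmeas (hπ n)).symm
          _ = ∫⁻ y : Fin n → ℝ, ∏ i : Fin n, ENNReal.ofReal (rexp (c * (y i) ^ 2))
                ∂Measure.pi (fun i : Fin n => ν i) := by
              rw [hmap n]
              apply lintegral_congr
              intro y
              rw [← ENNReal.ofReal_prod_of_nonneg (fun i _ => (Real.exp_pos _).le),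
                ← Real.exp_sum, Finset.mul_sum]
          _ = ∏ i : Fin n, ∫⁻ t, ENNReal.ofReal (rexp (c * t ^ 2)) ∂ν i :=
              lintegral_pi_prod n _ (fun i => inferInstance) _ (fun i => hmeas1)
      rw [hstep]
      calc ∏ i : Fin n, ∫⁻ t, ENNReal.ofReal (rexp (c * t ^ 2)) ∂ν i
          ≤ ∏ i : Fin n, ENNReal.ofReal (rexp (g (i : ℕ))) := by
            apply Finset.prod_le_prod'
            intro i _
            have hgb := gauss_bound (hvne i) hc ht₀lt (hwle i)
            rw [hvval i] at hgb
            have : 2 * c * (r * a (i:ℕ)) ^ 2 / (1 - t₀) = g (i : ℕ) := by rw [hgdef]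
            rw [this] at hgb
            exact hgb
        _ = ENNReal.ofReal (rexp (∑ i : Fin n, g (i : ℕ))) := by
            rw [← ENNReal.ofReal_prod_of_nonneg (fun i _ => (Real.exp_pos _).le),
              ← Real.exp_sum]
        _ ≤ ENNReal.ofReal (rexp (∑' i, g i)) := by
            apply ENNReal.ofReal_le_ofReal
            apply Real.exp_le_exp.mpr
            rw [← Finset.sum_range fun i => g i]
            exact hgsum.sum_le_tsum (Finset.range n) (fun i _ => hgnn i)
    exact ne_top_of_le_ne_top ENNReal.ofReal_ne_top (iSup_le hbound)
  · -- divergence at and above threshold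
    intro c hcA
    have hc : 0 < c := lt_of_lt_of_le hthr hcA
    obtain ⟨k, hk⟩ : ∃ k, a k = A := by
      have htend : Filter.Tendsto a Filter.atTop (nhds 0) := hasum.tendsto_atTop_zero
      have hfin : {i : ℕ | A / 2 < a i}.Finite := by
        have hev : ∀ᶠ i in Filter.atTop, a i < A / 2 := by
          have := htend.eventually (eventually_lt_nhds (by linarith : (0:ℝ) < A / 2))
          exact this
        rcases Filter.eventually_atTop.mp hev with ⟨N, hN⟩
        apply Set.Finite.subset (Set.finite_Iio N)
        intro i hi
        by_contra hiN
        exact absurd (hN i (not_lt.mp hiN)) (not_lt.mpr (le_of_lt hi))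
      have hne : {i : ℕ | A / 2 < a i}.Nonempty := by
        obtain ⟨i, hi⟩ := exists_lt_of_lt_ciSup (show A / 2 < A by linarith)
        exact ⟨i, hi⟩
      obtain ⟨k, hkmem, hkmax⟩ := Set.exists_max_image _ a hfin hne
      simp only [Set.mem_setOf_eq] at hkmem
      refine ⟨k, le_antisymm (hAk k) (ciSup_le fun i => ?_)⟩
      rcases le_or_gt (a i) (A / 2) with h | h
      · linarith
      · exact hkmax i h
    have hvthr : (2 * ((Real.toNNReal ((r * a k) ^ 2) : ℝ≥0) : ℝ))⁻¹ ≤ c := by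
      rw [hvval k, hk]
      calc (2 * (r * A) ^ 2)⁻¹ = 1 / (2 * r ^ 2 * A ^ 2) := by
            rw [one_div, mul_pow]; ring_nf
        _ ≤ c := hcA
    have hmeas1 : Measurable fun t : ℝ => ENNReal.ofReal (rexp (c * t ^ 2)) :=
      (((measurable_id.pow_const 2).const_mul c).exp).ennreal_ofReal
    refine top_le_iff.mp ?_
    calc (⊤ : ℝ≥0∞) = ∫⁻ t, ENNReal.ofReal (rexp (c * t ^ 2)) ∂ν k :=
          (gauss_div (hvne k) hvthr).symm
      _ = ∫⁻ x, ENNReal.ofReal (rexp (c * (x k) ^ 2)) ∂μ := by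
          rw [← hcoordmap k, lintegral_map hmeas1 (hcoord k)]
      _ ≤ ∫⁻ x, ENNReal.ofReal (rexp (c * ‖x‖ ^ 2)) ∂μ := by
          apply lintegral_mono
          intro x
          apply ENNReal.ofReal_le_ofReal
          exact Real.exp_le_exp.mpr (mul_le_mul_of_nonneg_left (hsq x k) hc.le)
  · -- divergence for exponent 2 + δ
    intro c δ hc hδ
    have hmeas1 : Measurable fun t : ℝ => ENNReal.ofReal (rexp (c * |t| ^ (2 + δ))) := by
      apply Measurable.ennreal_ofReal
      have : Continuous fun t : ℝ => |t| ^ (2 + δ) :=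
        (Real.continuous_rpow_const (by positivity)).comp continuous_abs
      exact (this.measurable.const_mul c).exp
    refine top_le_iff.mp ?_
    calc (⊤ : ℝ≥0∞) = ∫⁻ t, ENNReal.ofReal (rexp (c * |t| ^ (2 + δ))) ∂ν 0 :=
          (gauss_div' (hvne 0) hc hδ).symm
      _ = ∫⁻ x, ENNReal.ofReal (rexp (c * |x 0| ^ (2 + δ))) ∂μ := by
          rw [← hcoordmap 0, lintegral_map hmeas1 (hcoord 0)]
      _ ≤ ∫⁻ x, ENNReal.ofReal (rexp (c * ‖x‖ ^ (2 + δ))) ∂μ := by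
          apply lintegral_mono
          intro x
          apply ENNReal.ofReal_le_ofReal
          apply Real.exp_le_exp.mpr
          apply mul_le_mul_of_nonneg_left _ hc.le
          exact Real.rpow_le_rpow (abs_nonneg _) (habs x 0) (by positivity)
end

section
/- For 0 < p < q < ∞, the topologies on ℝ^ℕ induced by the metrics d_p form a strictly increasing chain: T (product topology) ⊊ T_∞ ⊊ T_q ⊊ T_p, where T_p is the topology induced by d_p((x_i),(y_i)) = min{1, (Σ|x_i−y_i|^p)^{1/max{1,p}}} and T_∞ by min{1, sup_i |x_i−y_i|}. -/
open Topology
open scoped Classical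

/-- The metric `d_p` on `ℝ^ℕ`, `d_p(x,y) = min{1, (Σᵢ|xᵢ-yᵢ|^p)^{1/max{1,p}}}`
(with value `1` when the sum diverges). -/

noncomputable def dP (p : ℝ) (x y : ℕ → ℝ) : ℝ :=
  if Summable (fun i => |x i - y i| ^ p) then
    min 1 ((∑' i, |x i - y i| ^ p) ^ (1 / max 1 p)) else 1

/-- The metric `d_∞` on `ℝ^ℕ`, `d_∞(x,y) = min{1, supᵢ |xᵢ-yᵢ|}` (with value `1` when
the supremum is infinite). -/

noncomputable def dInf (x y : ℕ → ℝ) : ℝ :=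
  if BddAbove (Set.range fun i => |x i - y i|) then min 1 (⨆ i, |x i - y i|) else 1

/-- The topology on `ℝ^ℕ` generated by the open balls of a distance function `d`. -/
def topOf (d : (ℕ → ℝ) → (ℕ → ℝ) → ℝ) : TopologicalSpace (ℕ → ℝ) :=
  TopologicalSpace.generateFrom {U | ∃ x r, 0 < r ∧ U = {y | d x y < r}}

lemma isOpen_topOf_iff {d : (ℕ → ℝ) → (ℕ → ℝ) → ℝ}
    (h0 : ∀ x, d x x = 0) (htri : ∀ x y z, d x z ≤ d x y + d y z) (U : Set (ℕ → ℝ)) :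
    IsOpen[topOf d] U ↔ ∀ x ∈ U, ∃ ε > 0, {y | d x y < ε} ⊆ U := by
  constructor
  · intro h
    change TopologicalSpace.GenerateOpen _ U at h
    induction h with
    | basic V hV =>
      obtain ⟨c, r, hr, rfl⟩ := hV
      intro x hx
      refine ⟨r - d c x, by simpa using hx, fun z hz => ?_⟩
      simp only [Set.mem_setOf_eq] at *
      calc d c z ≤ d c x + d x z := htri c x z
        _ < r := by linarith
    | univ => exact fun x _ => ⟨1, one_pos, fun _ _ => trivial⟩
    | inter V W _ _ ihV ihW =>
      intro x hx
      obtain ⟨ε₁, h₁, hb₁⟩ := ihV x hx.1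
      obtain ⟨ε₂, h₂, hb₂⟩ := ihW x hx.2
      refine ⟨min ε₁ ε₂, lt_min h₁ h₂, fun z hz => ?_⟩
      simp only [Set.mem_setOf_eq] at hz
      exact ⟨hb₁ (lt_of_lt_of_le hz (min_le_left _ _)), hb₂ (lt_of_lt_of_le hz (min_le_right _ _))⟩
    | sUnion S _ ih =>
      rintro x ⟨V, hV, hxV⟩
      obtain ⟨ε, hε, hb⟩ := ih V hV x hxV
      exact ⟨ε, hε, hb.trans (Set.subset_sUnion_of_mem hV)⟩
  · intro h
    choose! ε hε hsub using h
    have hU : U = ⋃ x ∈ U, {y | d x y < ε x} := by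
      ext y
      simp only [Set.mem_iUnion, Set.mem_setOf_eq]
      constructor
      · intro hy; exact ⟨y, hy, by simp [h0 y, hε y hy]⟩
      · rintro ⟨x, hx, hd⟩; exact hsub x hx hd
    rw [hU]
    letI := topOf d
    exact isOpen_biUnion fun x hx =>
      TopologicalSpace.isOpen_generateFrom_of_mem ⟨x, ε x, hε x hx, rfl⟩

lemma min_one_tri {a b c : ℝ} (hb : 0 ≤ b) (hc : 0 ≤ c) (h : a ≤ b + c) :
    min 1 a ≤ min 1 b + min 1 c := by
  rcases le_or_gt 1 b with h1 | h1
  · have : (1:ℝ) ≤ min 1 b + min 1 c := by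
      rw [min_eq_left h1]
      have : (0:ℝ) ≤ min 1 c := le_min zero_le_one hc
      linarith
    exact (min_le_left _ _).trans this
  rcases le_or_gt 1 c with h2 | h2
  · have : (1:ℝ) ≤ min 1 b + min 1 c := by
      rw [min_eq_left h2]
      have : (0:ℝ) ≤ min 1 b := le_min zero_le_one hb
      linarith
    exact (min_le_left _ _).trans this
  rw [min_eq_right h1.le, min_eq_right h2.le]
  exact (min_le_right _ _).trans h

lemma dP_le_one (p : ℝ) (x y : ℕ → ℝ) : dP p x y ≤ 1 := by
  unfold dP; split
  · exact min_le_left _ _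
  · exact le_refl 1

lemma dP_nonneg (p : ℝ) (x y : ℕ → ℝ) : 0 ≤ dP p x y := by
  unfold dP; split
  · exact le_min zero_le_one (Real.rpow_nonneg (tsum_nonneg fun i => Real.rpow_nonneg (abs_nonneg _) _) _)
  · exact zero_le_one

lemma dInf_le_one (x y : ℕ → ℝ) : dInf x y ≤ 1 := by
  unfold dInf; split
  · exact min_le_left _ _
  · exact le_refl 1

lemma dInf_nonneg (x y : ℕ → ℝ) : 0 ≤ dInf x y := by
  unfold dInf; split
  · next hb =>
    refine le_min zero_le_one ?_
    exact le_trans (abs_nonneg (x 0 - y 0)) (le_ciSup hb 0)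
  · exact zero_le_one

lemma dP_self {p : ℝ} (hp : 0 < p) (x : ℕ → ℝ) : dP p x x = 0 := by
  have h : (fun i => |x i - x i| ^ p) = fun _ => (0:ℝ) := by
    funext i; simp [Real.zero_rpow hp.ne']
  have hmax : (0:ℝ) < 1 / max 1 p := by positivity
  rw [dP, h, if_pos summable_zero, tsum_zero, Real.zero_rpow hmax.ne', min_eq_right zero_le_one]

lemma dInf_self (x : ℕ → ℝ) : dInf x x = 0 := by
  have h : (fun i => |x i - x i|) = fun _ => (0:ℝ) := by funext i; simp
  rw [dInf, h, if_pos (by simp [Set.range_const] : BddAbove (Set.range fun _ : ℕ => (0:ℝ)))]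
  rw [ciSup_const, min_eq_right zero_le_one]

lemma dInf_triangle (x y z : ℕ → ℝ) : dInf x z ≤ dInf x y + dInf y z := by
  by_cases hxy : BddAbove (Set.range fun i => |x i - y i|)
  · by_cases hyz : BddAbove (Set.range fun i => |y i - z i|)
    · have hbd : ∀ i, |x i - z i| ≤ (⨆ i, |x i - y i|) + ⨆ i, |y i - z i| := by
        intro i
        calc |x i - z i| ≤ |x i - y i| + |y i - z i| := abs_sub_le _ _ _
          _ ≤ _ := add_le_add (le_ciSup hxy i) (le_ciSup hyz i)
      have hb : BddAbove (Set.range fun i => |x i - z i|) := by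
        refine ⟨(⨆ i, |x i - y i|) + ⨆ i, |y i - z i|, ?_⟩
        rintro _ ⟨i, rfl⟩; exact hbd i
      have h0xy : (0:ℝ) ≤ ⨆ i, |x i - y i| := le_trans (abs_nonneg _) (le_ciSup hxy 0)
      have h0yz : (0:ℝ) ≤ ⨆ i, |y i - z i| := le_trans (abs_nonneg _) (le_ciSup hyz 0)
      rw [dInf, dInf, dInf, if_pos hb, if_pos hxy, if_pos hyz]
      exact min_one_tri h0xy h0yz (ciSup_le hbd)
    · have h1 : dInf y z = 1 := by rw [dInf, if_neg hyz]
      have := dInf_nonneg x y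
      have := dInf_le_one x z
      linarith
  · have h1 : dInf x y = 1 := by rw [dInf, if_neg hxy]
    have := dInf_nonneg y z
    have := dInf_le_one x z
    linarith

lemma real_rpow_add_le {a b t : ℝ} (ha : 0 ≤ a) (hb : 0 ≤ b) (h0 : 0 ≤ t) (h1 : t ≤ 1) :
    (a + b) ^ t ≤ a ^ t + b ^ t := by
  lift a to NNReal using ha
  lift b to NNReal using hb
  exact_mod_cast NNReal.rpow_add_le_add_rpow a b h0 h1

lemma dP_triangle {p : ℝ} (hp : 0 < p) (x y z : ℕ → ℝ) :
    dP p x z ≤ dP p x y + dP p y z := by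
  by_cases hxy : Summable (fun i => |x i - y i| ^ p)
  · by_cases hyz : Summable (fun i => |y i - z i| ^ p)
    · rcases le_or_gt p 1 with hp1 | hp1
      · -- p ≤ 1 : subadditivity
        have hmax : max 1 p = 1 := max_eq_left hp1
        have hptw : ∀ i, |x i - z i| ^ p ≤ |x i - y i| ^ p + |y i - z i| ^ p := by
          intro i
          calc |x i - z i| ^ p ≤ (|x i - y i| + |y i - z i|) ^ p :=
                Real.rpow_le_rpow (abs_nonneg _) (abs_sub_le _ _ _) hp.le
            _ ≤ _ := real_rpow_add_le (abs_nonneg _) (abs_nonneg _) hp.le hp1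
        have hxz : Summable (fun i => |x i - z i| ^ p) :=
          Summable.of_nonneg_of_le (fun i => Real.rpow_nonneg (abs_nonneg _) _) hptw
            (hxy.add hyz)
        rw [dP, dP, dP, if_pos hxz, if_pos hxy, if_pos hyz, hmax]
        simp only [div_one, Real.rpow_one]
        refine min_one_tri (tsum_nonneg fun i => Real.rpow_nonneg (abs_nonneg _) _)
          (tsum_nonneg fun i => Real.rpow_nonneg (abs_nonneg _) _) ?_
        calc ∑' i, |x i - z i| ^ p ≤ ∑' i, (|x i - y i| ^ p + |y i - z i| ^ p) :=
              Summable.tsum_le_tsum hptw hxz (hxy.add hyz)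
          _ = _ := Summable.tsum_add hxy hyz
      · -- p ≥ 1 : Minkowski
        have hmax : max 1 p = p := max_eq_right hp1.le
        obtain ⟨hsum, hmink⟩ := Real.Lp_add_le_tsum_of_nonneg hp1.le
          (fun i => abs_nonneg (x i - y i)) (fun i => abs_nonneg (y i - z i)) hxy hyz
        have hptw : ∀ i, |x i - z i| ^ p ≤ (|x i - y i| + |y i - z i|) ^ p := fun i =>
          Real.rpow_le_rpow (abs_nonneg _) (abs_sub_le _ _ _) hp.le
        have hxz : Summable (fun i => |x i - z i| ^ p) :=
          Summable.of_nonneg_of_le (fun i => Real.rpow_nonneg (abs_nonneg _) _) hptw hsum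
        rw [dP, dP, dP, if_pos hxz, if_pos hxy, if_pos hyz, hmax]
        refine min_one_tri (Real.rpow_nonneg (tsum_nonneg fun i =>
            Real.rpow_nonneg (abs_nonneg _) _) _)
          (Real.rpow_nonneg (tsum_nonneg fun i => Real.rpow_nonneg (abs_nonneg _) _) _) ?_
        calc (∑' i, |x i - z i| ^ p) ^ (1/p)
            ≤ (∑' i, (|x i - y i| + |y i - z i|) ^ p) ^ (1/p) :=
              Real.rpow_le_rpow (tsum_nonneg fun i => Real.rpow_nonneg (abs_nonneg _) _)
                (Summable.tsum_le_tsum hptw hxz hsum) (by positivity)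
          _ ≤ _ := hmink
    · have h1 : dP p y z = 1 := by rw [dP, if_neg hyz]
      have := dP_nonneg p x y
      have := dP_le_one p x z
      linarith
  · have h1 : dP p x y = 1 := by rw [dP, if_neg hxy]
    have := dP_nonneg p y z
    have := dP_le_one p x z
    linarith

lemma topOf_subset {d d' : (ℕ → ℝ) → (ℕ → ℝ) → ℝ}
    (h0 : ∀ x, d x x = 0) (htri : ∀ x y z, d x z ≤ d x y + d y z)
    (h0' : ∀ x, d' x x = 0) (htri' : ∀ x y z, d' x z ≤ d' x y + d' y z)
    (hcomp : ∀ x (ε : ℝ), 0 < ε → ∃ δ > 0, ∀ z, d' x z < δ → d x z < ε) :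
    {U | IsOpen[topOf d] U} ⊆ {U | IsOpen[topOf d'] U} := by
  intro U hU
  simp only [Set.mem_setOf_eq] at *
  rw [isOpen_topOf_iff h0 htri] at hU
  rw [isOpen_topOf_iff h0' htri']
  intro x hx
  obtain ⟨ε, hε, hb⟩ := hU x hx
  obtain ⟨δ, hδ, hc⟩ := hcomp x ε hε
  exact ⟨δ, hδ, fun z hz => hb (hc z hz)⟩

/-- If `dP p x z < δ ≤ 1`, extract summability and a bound on the sum. -/
lemma dP_lt_extract {p : ℝ} (hp : 0 < p) {x z : ℕ → ℝ} {δ : ℝ} (hδ1 : δ ≤ 1)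
    (h : dP p x z < δ) :
    Summable (fun i => |x i - z i| ^ p) ∧ ∑' i, |x i - z i| ^ p < δ ^ max 1 p := by
  rw [dP] at h
  split_ifs at h with hs
  · refine ⟨hs, ?_⟩
    set S := ∑' i, |x i - z i| ^ p with hS
    have hS0 : 0 ≤ S := tsum_nonneg fun i => Real.rpow_nonneg (abs_nonneg _) _
    have hP : (0:ℝ) < max 1 p := lt_of_lt_of_le one_pos (le_max_left _ _)
    have h2 : S ^ (1 / max 1 p) < δ := by
      rcases min_lt_iff.mp h with h' | h'
      · linarith
      · exact h'
    have key : (S ^ (1 / max 1 p)) ^ (max 1 p) = S := by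
      rw [← Real.rpow_mul hS0, one_div_mul_cancel hP.ne', Real.rpow_one]
    calc S = (S ^ (1 / max 1 p)) ^ (max 1 p) := key.symm
      _ < δ ^ max 1 p := Real.rpow_lt_rpow (Real.rpow_nonneg hS0 _) h2 hP
  · exact absurd (h.trans_le hδ1) (lt_irrefl 1)

/-- If the sum is small, `dP` is small. -/
lemma dP_lt_of_sum_lt {p : ℝ} (hp : 0 < p) {x z : ℕ → ℝ} {ε : ℝ} (hε : 0 < ε)
    (hs : Summable (fun i => |x i - z i| ^ p))
    (h : ∑' i, |x i - z i| ^ p < ε ^ max 1 p) : dP p x z < ε := by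
  rw [dP, if_pos hs]
  have hP : (0:ℝ) < max 1 p := lt_of_lt_of_le one_pos (le_max_left _ _)
  have hS0 : 0 ≤ ∑' i, |x i - z i| ^ p := tsum_nonneg fun i => Real.rpow_nonneg (abs_nonneg _) _
  calc min 1 ((∑' i, |x i - z i| ^ p) ^ (1 / max 1 p)) ≤ _ := min_le_right _ _
    _ < (ε ^ max 1 p) ^ (1 / max 1 p) := Real.rpow_lt_rpow hS0 h (by positivity)
    _ = ε := by rw [← Real.rpow_mul hε.le, mul_one_div_cancel hP.ne', Real.rpow_one]

lemma abs_lt_of_dInf_lt {x z : ℕ → ℝ} {δ : ℝ} (hδ : δ ≤ 1) (h : dInf x z < δ) (i : ℕ) :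
    |x i - z i| < δ := by
  rw [dInf] at h
  split_ifs at h with hb
  · rcases min_lt_iff.mp h with h' | h'
    · linarith
    · exact (le_ciSup hb i).trans_lt h'
  · exact absurd (h.trans_le hδ) (lt_irrefl 1)

lemma comp_inf_q {q : ℝ} (hq : 0 < q) (x : ℕ → ℝ) (ε : ℝ) (hε : 0 < ε) :
    ∃ δ > 0, ∀ z, dP q x z < δ → dInf x z < ε := by
  have hQ : (0:ℝ) < max 1 q := lt_of_lt_of_le one_pos (le_max_left _ _)
  set m := min 1 ε with hm
  have hm0 : 0 < m := lt_min one_pos hε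
  have hm1 : m ≤ 1 := min_le_left _ _
  refine ⟨(m/2) ^ (q / max 1 q), Real.rpow_pos_of_pos (by linarith) _, fun z hz => ?_⟩
  have hδ1 : (m/2) ^ (q / max 1 q) ≤ 1 :=
    Real.rpow_le_one (by linarith) (by linarith) (by positivity)
  obtain ⟨hs, hsum⟩ := dP_lt_extract hq hδ1 hz
  have hδQ : ((m/2) ^ (q / max 1 q)) ^ max 1 q = (m/2) ^ q := by
    rw [← Real.rpow_mul (by linarith), div_mul_cancel₀ _ hQ.ne']
  rw [hδQ] at hsum
  have hterm : ∀ i, |x i - z i| ≤ m/2 := by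
    intro i
    have h1 : |x i - z i| ^ q ≤ ∑' j, |x j - z j| ^ q :=
      Summable.le_tsum hs i fun j _ => Real.rpow_nonneg (abs_nonneg _) _
    have h2 : |x i - z i| ^ q < (m/2) ^ q := lt_of_le_of_lt h1 hsum
    by_contra hcon
    push_neg at hcon
    exact absurd (Real.rpow_le_rpow (by linarith) hcon.le hq.le) (not_le.mpr h2)
  have hbdd : BddAbove (Set.range fun i => |x i - z i|) :=
    ⟨m/2, by rintro _ ⟨i, rfl⟩; exact hterm i⟩
  rw [dInf, if_pos hbdd]
  have hmε : m ≤ ε := min_le_right _ _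
  calc min 1 (⨆ i, |x i - z i|) ≤ ⨆ i, |x i - z i| := min_le_right _ _
    _ ≤ m/2 := ciSup_le hterm
    _ < ε := by linarith

lemma comp_q_p {p q : ℝ} (hp : 0 < p) (hpq : p < q) (x : ℕ → ℝ) (ε : ℝ) (hε : 0 < ε) :
    ∃ δ > 0, ∀ z, dP p x z < δ → dP q x z < ε := by
  have hq : 0 < q := hp.trans hpq
  have hP : (0:ℝ) < max 1 p := lt_of_lt_of_le one_pos (le_max_left _ _)
  have hQ : (0:ℝ) < max 1 q := lt_of_lt_of_le one_pos (le_max_left _ _)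
  set m := min 1 ε with hm
  have hm0 : 0 < m := lt_min one_pos hε
  have hm1 : m ≤ 1 := min_le_left _ _
  have hbase : (0:ℝ) < (m/2) ^ max 1 q := Real.rpow_pos_of_pos (by linarith) _
  have hbase1 : (m/2) ^ max 1 q ≤ 1 := Real.rpow_le_one (by linarith) (by linarith) hQ.le
  refine ⟨((m/2) ^ max 1 q) ^ (1 / max 1 p), Real.rpow_pos_of_pos hbase _, fun z hz => ?_⟩
  have hδ1 : ((m/2) ^ max 1 q) ^ (1 / max 1 p) ≤ 1 :=
    Real.rpow_le_one hbase.le hbase1 (by positivity)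
  obtain ⟨hs, hsum⟩ := dP_lt_extract hp hδ1 hz
  have hδP : (((m/2) ^ max 1 q) ^ (1 / max 1 p)) ^ max 1 p = (m/2) ^ max 1 q := by
    rw [← Real.rpow_mul hbase.le, one_div_mul_cancel hP.ne', Real.rpow_one]
  rw [hδP] at hsum
  have hle1 : ∀ i, |x i - z i| ≤ 1 := by
    intro i
    by_contra hcon
    push_neg at hcon
    have h1 : (1:ℝ) ≤ |x i - z i| ^ p := by
      have := Real.rpow_le_rpow zero_le_one hcon.le hp.le
      rwa [Real.one_rpow] at this
    have h2 : |x i - z i| ^ p ≤ ∑' j, |x j - z j| ^ p :=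
      Summable.le_tsum hs i fun j _ => Real.rpow_nonneg (abs_nonneg _) _
    linarith [lt_of_le_of_lt (h1.trans h2) (hsum.trans_le hbase1)]
  have hptw : ∀ i, |x i - z i| ^ q ≤ |x i - z i| ^ p := by
    intro i
    rcases (abs_nonneg (x i - z i)).eq_or_lt with h0 | h0
    · rw [← h0, Real.zero_rpow hq.ne', Real.zero_rpow hp.ne']
    · exact Real.rpow_le_rpow_of_exponent_ge h0 (hle1 i) hpq.le
  have hsq : Summable (fun i => |x i - z i| ^ q) :=
    Summable.of_nonneg_of_le (fun i => Real.rpow_nonneg (abs_nonneg _) _) hptw hs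
  refine dP_lt_of_sum_lt hq hε hsq ?_
  have h3 : ∑' i, |x i - z i| ^ q ≤ ∑' i, |x i - z i| ^ p := Summable.tsum_le_tsum hptw hsq hs
  have h4 : (m/2) ^ max 1 q < ε ^ max 1 q :=
    Real.rpow_lt_rpow (by linarith) (by have : m ≤ ε := min_le_right _ _; linarith) hQ
  linarith

lemma topOf_ball_isOpen {d : (ℕ → ℝ) → (ℕ → ℝ) → ℝ} {x : ℕ → ℝ} {r : ℝ} (hr : 0 < r) :
    IsOpen[topOf d] {y | d x y < r} :=
  TopologicalSpace.isOpen_generateFrom_of_mem ⟨x, r, hr, rfl⟩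

lemma pi_subset_inf : {U | IsOpen[Pi.topologicalSpace] U} ⊆ {U | IsOpen[topOf dInf] U} := by
  intro U hU
  simp only [Set.mem_setOf_eq] at *
  rw [isOpen_topOf_iff dInf_self dInf_triangle]
  intro x hx
  obtain ⟨I, u, hu, hsub⟩ := isOpen_pi_iff.mp hU x hx
  have key : ∀ i : ℕ, ∃ e : ℝ, 0 < e ∧ (i ∈ I → Metric.ball (x i) e ⊆ u i) := by
    intro i
    by_cases hi : i ∈ I
    · obtain ⟨e, he, hb⟩ := Metric.isOpen_iff.mp (hu i hi).1 (x i) (hu i hi).2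
      exact ⟨e, he, fun _ => hb⟩
    · exact ⟨1, one_pos, fun h => absurd h hi⟩
  choose e he hb using key
  set δ := min 1 ((insert 0 I).inf' (Finset.insert_nonempty _ _) e) with hδdef
  have hδpos : 0 < δ := lt_min one_pos (by rw [Finset.lt_inf'_iff]; exact fun i _ => he i)
  refine ⟨δ, hδpos, fun z hz => hsub ?_⟩
  simp only [Set.mem_setOf_eq] at hz
  refine Set.mem_pi.mpr fun i hi => ?_
  apply hb i hi
  rw [Metric.mem_ball, Real.dist_eq]
  have h1 : |x i - z i| < δ := abs_lt_of_dInf_lt (min_le_left _ _) hz i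
  have h2 : δ ≤ e i :=
    (min_le_right _ _).trans (Finset.inf'_le _ (Finset.mem_insert_of_mem hi))
  rw [abs_sub_comm]
  linarith

/-- witness 1 : an `T_∞`-open set that is not product-open -/
lemma witness_inf : ∃ U, IsOpen[topOf dInf] U ∧ ¬ IsOpen[Pi.topologicalSpace] U := by
  refine ⟨{y | dInf (fun _ => 0) y < 1/2}, topOf_ball_isOpen (by norm_num), fun h => ?_⟩
  have hmem : (fun _ => (0:ℝ)) ∈ {y | dInf (fun _ => 0) y < 1/2} := by
    simp only [Set.mem_setOf_eq, dInf_self]; norm_num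
  obtain ⟨I, u, hu, hsub⟩ := isOpen_pi_iff.mp h _ hmem
  set z : ℕ → ℝ := fun i => if i ∈ I then (0:ℝ) else 1 with hzdef
  have hz : z ∈ (I : Set ℕ).pi u := by
    refine Set.mem_pi.mpr fun i hi => ?_
    show (if i ∈ I then (0:ℝ) else 1) ∈ u i
    rw [if_pos (Finset.mem_coe.mp hi)]
    exact (hu i (Finset.mem_coe.mp hi)).2
  have hzU := hsub hz
  simp only [Set.mem_setOf_eq] at hzU
  set j := I.sup id + 1 with hjdef
  have hj : j ∉ I := by
    intro hmemj
    have := Finset.le_sup (f := id) hmemj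
    simp only [id] at this
    omega
  have := abs_lt_of_dInf_lt (by norm_num) hzU j
  rw [hzdef] at this
  simp only [if_neg hj, zero_sub, abs_neg, abs_one] at this
  norm_num at this

/-- witness 2 : a `T_q`-open set that is not `T_∞`-open -/
lemma witness_q {q : ℝ} (hq : 0 < q) :
    ∃ U, IsOpen[topOf (dP q)] U ∧ ¬ IsOpen[topOf dInf] U := by
  refine ⟨{y | dP q (fun _ => 0) y < 1/2}, topOf_ball_isOpen (by norm_num), fun h => ?_⟩
  rw [isOpen_topOf_iff dInf_self dInf_triangle] at h
  obtain ⟨ε, hε, hb⟩ := h (fun _ => 0) (by simp [dP_self hq])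
  set c := min (1/2) (ε/2) with hcdef
  have hc0 : 0 < c := lt_min (by norm_num) (by linarith)
  have hc1 : c ≤ 1/2 := min_le_left _ _
  have hcε : c ≤ ε/2 := min_le_right _ _
  set z : ℕ → ℝ := fun _ => c with hzdef
  have habs : (fun i => |(fun _ => (0:ℝ)) i - z i|) = fun _ => c := by
    funext i; rw [hzdef]; simp [abs_of_nonneg hc0.le]
  have hdinf : dInf (fun _ => 0) z < ε := by
    rw [dInf, habs, if_pos ⟨c, by rintro _ ⟨i, rfl⟩; exact le_rfl⟩, ciSup_const]
    calc min 1 c ≤ c := min_le_right _ _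
      _ < ε := by linarith
  have hzU := hb hdinf
  simp only [Set.mem_setOf_eq] at hzU
  have hns : ¬ Summable (fun i => |(fun _ => (0:ℝ)) i - z i| ^ q) := by
    intro hs
    have hfun : (fun i => |(fun _ => (0:ℝ)) i - z i| ^ q) = fun _ : ℕ => c ^ q := by
      funext i; rw [congrFun habs i]
    rw [hfun, summable_const_iff] at hs
    exact absurd hs (ne_of_gt (Real.rpow_pos_of_pos hc0 q))
  rw [dP, if_neg hns] at hzU
  norm_num at hzU

/-- witness 3 : a `T_p`-open set that is not `T_q`-open -/
lemma witness_p {p q : ℝ} (hp : 0 < p) (hpq : p < q) :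
    ∃ U, IsOpen[topOf (dP p)] U ∧ ¬ IsOpen[topOf (dP q)] U := by
  have hq : 0 < q := hp.trans hpq
  have hQ : (0:ℝ) < max 1 q := lt_of_lt_of_le one_pos (le_max_left _ _)
  refine ⟨{y | dP p (fun _ => 0) y < 1/2}, topOf_ball_isOpen (by norm_num), fun h => ?_⟩
  rw [isOpen_topOf_iff (dP_self hq) (dP_triangle hq)] at h
  obtain ⟨ε, hε, hb⟩ := h (fun _ => 0) (by simp [dP_self hp])
  -- the series ∑ (i+1)^(-(q/p)) converges
  have hexp : -(q/p) < -1 := by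
    rw [neg_lt_neg_iff]
    exact (one_lt_div hp).mpr hpq
  have hTs : Summable (fun i : ℕ => ((i:ℝ)+1) ^ (-(q/p))) := by
    have h1 : Summable (fun n : ℕ => ((n:ℝ)) ^ (-(q/p))) := Real.summable_nat_rpow.mpr hexp
    have h2 := (summable_nat_add_iff (f := fun n : ℕ => ((n:ℝ)) ^ (-(q/p))) 1).mpr h1
    refine h2.congr fun n => ?_
    push_cast
    ring_nf
  set T := ∑' i : ℕ, ((i:ℝ)+1) ^ (-(q/p)) with hTdef
  have hT0 : 0 ≤ T := tsum_nonneg fun i => Real.rpow_nonneg (by positivity) _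
  set m := min 1 ε with hmdef
  have hm0 : 0 < m := lt_min one_pos hε
  have hmQ : 0 < m ^ max 1 q := Real.rpow_pos_of_pos hm0 _
  set c := (m ^ max 1 q / (T+1)) ^ (1/q) with hcdef
  have hc0 : 0 < c := Real.rpow_pos_of_pos (by positivity) _
  have hcq : c ^ q = m ^ max 1 q / (T+1) := by
    rw [hcdef, ← Real.rpow_mul (by positivity), one_div_mul_cancel hq.ne', Real.rpow_one]
  set z : ℕ → ℝ := fun i => c * ((i:ℝ)+1) ^ (-(1/p)) with hzdef
  have hgpos : ∀ i : ℕ, (0:ℝ) < ((i:ℝ)+1) ^ (-(1/p)) := fun i =>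
    Real.rpow_pos_of_pos (by positivity) _
  have habs : ∀ i, |(fun _ => (0:ℝ)) i - z i| = c * ((i:ℝ)+1) ^ (-(1/p)) := by
    intro i
    rw [hzdef]
    simp only [zero_sub, abs_neg]
    exact abs_of_pos (mul_pos hc0 (hgpos i))
  -- the p-th powers are not summable
  have hfp : (fun i => |(fun _ => (0:ℝ)) i - z i| ^ p) = fun i : ℕ => c ^ p * ((i:ℝ)+1)⁻¹ := by
    funext i
    rw [habs i, Real.mul_rpow hc0.le (hgpos i).le,
      ← Real.rpow_mul (by positivity : (0:ℝ) ≤ (i:ℝ)+1),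
      show -(1/p)*p = -1 by field_simp, Real.rpow_neg_one]
  have hns : ¬ Summable (fun i => |(fun _ => (0:ℝ)) i - z i| ^ p) := by
    rw [hfp]
    intro hs
    have h1 : Summable (fun i : ℕ => ((i:ℝ)+1)⁻¹) := by
      have := hs.mul_left (c ^ p)⁻¹
      refine this.congr fun i => ?_
      rw [← mul_assoc, inv_mul_cancel₀ (ne_of_gt (Real.rpow_pos_of_pos hc0 p)), one_mul]
    have h2 : Summable (fun n : ℕ => ((n:ℝ))⁻¹) := by
      refine (summable_nat_add_iff (f := fun n : ℕ => ((n:ℝ))⁻¹) 1).mp ?_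
      refine h1.congr fun n => ?_
      push_cast
      ring_nf
    exact Real.not_summable_natCast_inv h2
  -- the q-th powers : summable with small sum
  have hfq : (fun i => |(fun _ => (0:ℝ)) i - z i| ^ q) =
      fun i : ℕ => c ^ q * ((i:ℝ)+1) ^ (-(q/p)) := by
    funext i
    rw [habs i, Real.mul_rpow hc0.le (hgpos i).le,
      ← Real.rpow_mul (by positivity : (0:ℝ) ≤ (i:ℝ)+1),
      show -(1/p)*q = -(q/p) by ring]
  have hsq : Summable (fun i => |(fun _ => (0:ℝ)) i - z i| ^ q) := by
    rw [hfq]; exact hTs.mul_left _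
  have hsum : ∑' i, |(fun _ => (0:ℝ)) i - z i| ^ q < ε ^ max 1 q := by
    have h1 : ∑' i, |(fun _ => (0:ℝ)) i - z i| ^ q = c ^ q * T := by
      rw [show (∑' i, |(fun _ => (0:ℝ)) i - z i| ^ q)
          = ∑' i : ℕ, c ^ q * ((i:ℝ)+1) ^ (-(q/p)) from tsum_congr fun i => congrFun hfq i,
        tsum_mul_left]
    rw [h1, hcq]
    have h2 : m ^ max 1 q / (T+1) * T < m ^ max 1 q := by
      rw [div_mul_eq_mul_div, div_lt_iff₀ (by linarith)]
      have := mul_lt_mul_of_pos_left (show T < T + 1 by linarith) hmQ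
      linarith
    have h3 : m ^ max 1 q ≤ ε ^ max 1 q :=
      Real.rpow_le_rpow hm0.le (min_le_right _ _) hQ.le
    linarith
  have hdq : dP q (fun _ => 0) z < ε := dP_lt_of_sum_lt hq hε hsq hsum
  have hzU := hb hdq
  simp only [Set.mem_setOf_eq] at hzU
  rw [dP, if_neg hns] at hzU
  norm_num at hzU


/-- For `0 < p < q < ∞` the topologies on `ℝ^ℕ` form a strictly increasing chain
`T ⊊ T_∞ ⊊ T_q ⊊ T_p`, where `T` is the product topology and `T_s` is the topology of
the metric `d_s`. -/
theorem topologies_strict_chain (p q : ℝ) (hp : 0 < p) (hpq : p < q) :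
    {U | IsOpen[Pi.topologicalSpace] U} ⊂ {U | IsOpen[topOf dInf] U} ∧
    {U | IsOpen[topOf dInf] U} ⊂ {U | IsOpen[topOf (dP q)] U} ∧
    {U | IsOpen[topOf (dP q)] U} ⊂ {U | IsOpen[topOf (dP p)] U} := by
  have hq : 0 < q := hp.trans hpq
  refine ⟨?_, ?_, ?_⟩
  · refine (Set.ssubset_iff_of_subset pi_subset_inf).mpr ?_
    obtain ⟨U, h1, h2⟩ := witness_inf
    exact ⟨U, h1, h2⟩
  · have hsub := topOf_subset dInf_self dInf_triangle (dP_self hq) (dP_triangle hq)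
      (comp_inf_q hq)
    refine (Set.ssubset_iff_of_subset hsub).mpr ?_
    obtain ⟨U, h1, h2⟩ := witness_q hq
    exact ⟨U, h1, h2⟩
  · have hsub := topOf_subset (dP_self hq) (dP_triangle hq) (dP_self hp) (dP_triangle hp)
      (comp_q_p hp hpq)
    refine (Set.ssubset_iff_of_subset hsub).mpr ?_
    obtain ⟨U, h1, h2⟩ := witness_p hp hpq
    exact ⟨U, h1, h2⟩
end
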